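/- arXiv:1610.02602 — 5 statements merged into one kernel-verified Lean document; each statement's English description precedes it below -/
import Mathlib

section
/- If p, q ∈ ℂ[z,w] are nonzero and relatively prime, then the ideal generated by p and q has finite codimension as a ℂ-linear subspace of ℂ[z,w]; i.e., there is a finite-dimensional ℂ-linear subspace R of ℂ[z,w] such that every ψ ∈ ℂ[z,w] can be written ψ = s·p + t·q + r with s, t ∈ ℂ[z,w] and r ∈ R. -/
noncomputable section

open MvPolynomial

/-- Polynomials in two variables `z, w` over `ℂ`. -/
abbrev CPoly2 : Type := MvPolynomial (Fin 2) ℂ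

/-- Evaluation of a two-variable polynomial at `(z, w)`. -/
def pevalAt (p : CPoly2) (z w : ℂ) : ℂ := eval ![z, w] p

/-- The zero set `Z(p) ⊆ ℂ²`. -/
def zeroSet (p : CPoly2) : Set (ℂ × ℂ) := {x | pevalAt p x.1 x.2 = 0}

/-- The open bidisk `𝔻²`. -/
def biDisk : Set (ℂ × ℂ) := {x | ‖x.1‖ < 1 ∧ ‖x.2‖ < 1}

/-- `𝔙(p) = Z(p) ∩ 𝔻²`. -/
def distVar (p : CPoly2) : Set (ℂ × ℂ) := zeroSet p ∩ biDisk

/-- A polynomial is inner toral if its zero set lies in `𝔻² ∪ 𝕋² ∪ 𝔼²`. -/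
def InnerToral (p : CPoly2) : Prop :=
  ∀ z w : ℂ, pevalAt p z w = 0 →
    (‖z‖ < 1 ∧ ‖w‖ < 1) ∨
    (‖z‖ = 1 ∧ ‖w‖ = 1) ∨
    (1 < ‖z‖ ∧ 1 < ‖w‖)

/-- `p` and `q` are relatively prime: no non-constant polynomial divides both. -/
def RelPrime (p q : CPoly2) : Prop :=
  ∀ d : CPoly2, d ∣ p → d ∣ q → d.totalDegree = 0

/-- `p` is square free: the square of a non-constant polynomial never divides `p`. -/
def SqFree (p : CPoly2) : Prop :=
  ∀ d : CPoly2, 0 < d.totalDegree → ¬ d * d ∣ p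

/-- `(λ, μ)` is a regular point for `p`: `p(λ,μ) = 0` and `∇p(λ,μ) ≠ 0`. -/
def IsRegularPoint (p : CPoly2) (x : ℂ × ℂ) : Prop :=
  pevalAt p x.1 x.2 = 0 ∧
    (eval ![x.1, x.2] (pderiv (0 : Fin 2) p) ≠ 0 ∨
     eval ![x.1, x.2] (pderiv (1 : Fin 2) p) ≠ 0)

/-- The one-variable polynomial `p_λ(w) = p(λ, w)`. -/
def pSlice (p : CPoly2) (lam : ℂ) : Polynomial ℂ :=
  MvPolynomial.aeval ![Polynomial.C lam, Polynomial.X] p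

section Ops

variable {H : Type*} [NormedAddCommGroup H] [NormedSpace ℂ H]

/-- For `q(z,w) = Σ c_{ij} z^i w^j`, `polyOp q S T = q(S,T) = Σ c_{ij} S^i T^j`. -/
def polyOp (q : CPoly2) (S T : H →L[ℂ] H) : H →L[ℂ] H :=
  ∑ m ∈ q.support, q.coeff m • (S ^ (m 0) * T ^ (m 1))

/-- A pure isometry: an isometry with `⋂ₙ Vⁿ(H) = {0}`. -/
def IsPureIsometry (S : H →L[ℂ] H) : Prop :=
  (∀ x : H, ‖S x‖ = ‖x‖) ∧ (⋂ n : ℕ, Set.range (⇑(S ^ (n + 1)))) = ({0} : Set H)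

/-- A pure `p`-isopair: a commuting pair of pure isometries annihilated by `p`. -/
def IsPureIsopair (p : CPoly2) (S T : H →L[ℂ] H) : Prop :=
  Commute S T ∧ IsPureIsometry S ∧ IsPureIsometry T ∧ polyOp p S T = 0

/-- The set `{Σ_j q_j(S,T) f_j : q_j ∈ ℂ[z,w]}`. -/
def cyclicSet (S T : H →L[ℂ] H) {k : ℕ} (f : Fin k → H) : Set H :=
  {x | ∃ q : Fin k → CPoly2, x = ∑ j, polyOp (q j) S T (f j)}

/-- `(S,T)` is `k`-cyclic: some `f_1, …, f_k` have `closure {Σ q_j(S,T) f_j} = H`. -/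
def IsKCyclic (S T : H →L[ℂ] H) (k : ℕ) : Prop :=
  ∃ f : Fin k → H, closure (cyclicSet S T f) = Set.univ

/-- `(S,T)` is at most nearly `k`-cyclic: some `f_1, …, f_k` have
`closure {Σ q_j(S,T) f_j}` of finite codimension in `H`. -/
def AtMostNearlyKCyclic (S T : H →L[ℂ] H) (k : ℕ) : Prop :=
  ∃ f : Fin k → H,
    FiniteDimensional ℂ (H ⧸ (Submodule.span ℂ (cyclicSet S T f)).topologicalClosure)

/-- `(S,T)` is nearly `k`-cyclic: at most nearly `k`-cyclic but not `k'` for `k' < k`. -/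
def NearlyKCyclic (S T : H →L[ℂ] H) (k : ℕ) : Prop :=
  AtMostNearlyKCyclic S T k ∧ ∀ k' < k, ¬ AtMostNearlyKCyclic S T k'

/-- Restriction of a continuous linear operator to an invariant subspace. -/
def clmRestrict (S : H →L[ℂ] H) (E : Submodule ℂ H) (h : ∀ x ∈ E, S x ∈ E) : E →L[ℂ] E :=
  { toLinearMap := (S : H →ₗ[ℂ] H).restrict h
    cont := by exact Continuous.subtype_mk (S.continuous.comp continuous_subtype_val) _ }

end Ops

/-- Unitary equivalence of pairs: a unitary `U` with `U S₁ = S₂ U` and `U T₁ = T₂ U`. -/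
def UnitarilyEquivPairs {H1 H2 : Type*} [NormedAddCommGroup H1] [NormedSpace ℂ H1]
    [NormedAddCommGroup H2] [NormedSpace ℂ H2]
    (S1 T1 : H1 →L[ℂ] H1) (S2 T2 : H2 →L[ℂ] H2) : Prop :=
  ∃ U : H1 ≃ₗᵢ[ℂ] H2, (∀ x, U (S1 x) = S2 (U x)) ∧ (∀ x, U (T1 x) = T2 (U x))

section Hilbert

variable {H : Type*} [NormedAddCommGroup H] [InnerProductSpace ℂ H] [CompleteSpace H]

/-- The multiplicity of an isometry: `dim ker V*`. -/
def multiplicity' (S : H →L[ℂ] H) : Cardinal :=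
  Module.rank ℂ (LinearMap.ker (ContinuousLinearMap.adjoint S : H →ₗ[ℂ] H))

/-- Finite bimultiplicity: both `mult S` and `mult T` are finite. -/
def FiniteBimult (S T : H →L[ℂ] H) : Prop :=
  multiplicity' S < Cardinal.aleph0 ∧ multiplicity' T < Cardinal.aleph0

/-- `dim (ker (S - λ)* ∩ ker (T - μ)*)`. -/
def jointKerDim (S T : H →L[ℂ] H) (lam mu : ℂ) : Cardinal :=
  Module.rank ℂ
    ↥(LinearMap.ker (ContinuousLinearMap.adjoint (S - lam • 1) : H →ₗ[ℂ] H) ⊓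
      LinearMap.ker (ContinuousLinearMap.adjoint (T - mu • 1) : H →ₗ[ℂ] H))

/-- `(S,T)` has rank `α`: for each `j` and every regular point `(λ,μ)` of `p` in `𝔙(p_j)`,
`dim (ker (S-λ)* ∩ ker (T-μ)*) = α_j`. -/
def HasRank (p : CPoly2) {s : ℕ} (ps : Fin s → CPoly2) (S T : H →L[ℂ] H)
    (α : Fin s → ℕ) : Prop :=
  ∀ j : Fin s, ∀ x : ℂ × ℂ, x ∈ distVar (ps j) → IsRegularPoint p x →
    jointKerDim S T x.1 x.2 = (α j : Cardinal)

/-- Rank for an isopair attached to a single irreducible polynomial. -/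
def HasRankIrred (p : CPoly2) (S T : H →L[ℂ] H) (a : ℕ) : Prop :=
  ∀ x : ℂ × ℂ, x ∈ distVar p → IsRegularPoint p x →
    jointKerDim S T x.1 x.2 = (a : Cardinal)

end Hilbert

/-- A pair of operators acting on some complex Hilbert space. -/
structure HilbertPair where
  space : Type*
  [nacg : NormedAddCommGroup space]
  [ips : InnerProductSpace ℂ space]
  [cs : CompleteSpace space]
  S : space →L[ℂ] space
  T : space →L[ℂ] space

attribute [instance] HilbertPair.nacg HilbertPair.ips HilbertPair.cs

open scoped nonZeroDivisors

/-- The fraction field `ℂ(z)`. -/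
abbrev KK : Type := RatFunc ℂ

namespace Statement1Aux

/-- `MvPolynomial (Fin 1) ℂ ≃ₐ[ℂ] Polynomial ℂ`. -/
def e1 : MvPolynomial (Fin 1) ℂ ≃ₐ[ℂ] Polynomial ℂ :=
  (renameEquiv ℂ (Equiv.equivPUnit.{_, 1} (Fin 1))).trans (pUnitAlgEquiv ℂ)

/-- `ℂ[z,w] ≃ₐ[ℂ] (ℂ[z])[w]` (outer variable is `X 0`). -/
def e : CPoly2 ≃ₐ[ℂ] Polynomial (Polynomial ℂ) :=
  (finSuccEquiv ℂ 1).trans (Polynomial.mapAlgEquiv e1)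

lemma e_X1 : e (X 1) = Polynomial.C Polynomial.X := by
  have h1 : (X 1 : CPoly2) = X (Fin.succ 0) := rfl
  rw [e, AlgEquiv.trans_apply, h1, finSuccEquiv_X_succ]
  show Polynomial.map e1.toAlgHom.toRingHom (Polynomial.C (X 0)) = _
  rw [Polynomial.map_C]
  congr 1
  show e1 (X 0) = Polynomial.X
  rw [e1, AlgEquiv.trans_apply, renameEquiv_apply, rename_X]
  simp [pUnitAlgEquiv]

lemma aeval_CX (c : Polynomial ℂ) :
    Polynomial.aeval (Polynomial.C Polynomial.X : Polynomial (Polynomial ℂ)) c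
      = Polynomial.C c := by
  have : (Polynomial.aeval (Polynomial.C Polynomial.X : Polynomial (Polynomial ℂ)) :
      Polynomial ℂ →ₐ[ℂ] Polynomial (Polynomial ℂ)) = Polynomial.CAlgHom := by
    apply Polynomial.algHom_ext
    simp [Polynomial.CAlgHom]
  rw [this]; rfl

lemma e_symm_C (c : Polynomial ℂ) :
    e.symm (Polynomial.C c) = Polynomial.aeval (X 1 : CPoly2) c := by
  apply e.injective
  rw [AlgEquiv.apply_symm_apply]
  symm
  rw [show e ((Polynomial.aeval (X 1 : CPoly2)) c)
        = Polynomial.aeval (e (X 1 : CPoly2)) c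
      from (Polynomial.aeval_algHom_apply e.toAlgHom (X 1) c).symm, e_X1, aeval_CX]


lemma exists_univar_poly (P Q : Polynomial (Polynomial ℂ)) (hP : P ≠ 0) (hQ : Q ≠ 0)
    (h : IsRelPrime P Q) :
    ∃ a b : Polynomial (Polynomial ℂ), ∃ c : Polynomial ℂ, c ≠ 0 ∧
      a * P + b * Q = Polynomial.C c := by
  classical
  set φ : Polynomial (Polynomial ℂ) →+* Polynomial KK :=
    Polynomial.mapRingHom (algebraMap (Polynomial ℂ) KK) with hφ
  have hinj : Function.Injective φ :=
    Polynomial.map_injective _ (IsFractionRing.injective _ _)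
  have hmapne : ∀ u : Polynomial (Polynomial ℂ), u ≠ 0 → φ u ≠ 0 := by
    intro u hu h0
    exact hu (hinj (by simpa using h0))
  have hCmap : ∀ x : Polynomial ℂ,
      φ (Polynomial.C x) = Polynomial.C (algebraMap (Polynomial ℂ) KK x) :=
    fun x => Polynomial.map_C _
  have hrel : IsRelPrime (φ P) (φ Q) := by
    intro d hdP hdQ
    by_contra hd
    obtain ⟨b, hb⟩ := IsLocalization.integerNormalization_map_to_map (Polynomial ℂ)⁰ d
    set d₁ := IsLocalization.integerNormalization (Polynomial ℂ)⁰ d with hd₁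
    have hkne : algebraMap (Polynomial ℂ) KK (b : Polynomial ℂ) ≠ 0 :=
      IsFractionRing.to_map_ne_zero_of_mem_nonZeroDivisors b.2
    have hkunit : IsUnit (Polynomial.C (algebraMap (Polynomial ℂ) KK (b : Polynomial ℂ))) :=
      Polynomial.isUnit_C.mpr (isUnit_iff_ne_zero.mpr hkne)
    have hdne : d ≠ 0 := ne_zero_of_dvd_ne_zero (hmapne P hP) hdP
    have hb' : φ d₁
        = Polynomial.C (algebraMap (Polynomial ℂ) KK (b : Polynomial ℂ)) * d := by
      show Polynomial.map (algebraMap (Polynomial ℂ) KK) d₁ = _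
      rw [hb, Algebra.smul_def, Polynomial.algebraMap_apply]
    have hd₁ne : d₁ ≠ 0 := by
      intro h0
      rw [h0, map_zero] at hb'
      exact mul_ne_zero (Polynomial.C_ne_zero.mpr hkne) hdne hb'.symm
    set d₂ := d₁.primPart with hd₂
    have hprim : d₂.IsPrimitive := d₁.isPrimitive_primPart
    have hcont : d₁.content ≠ 0 := fun h0 => hd₁ne (Polynomial.content_eq_zero_iff.mp h0)
    have hcunit : IsUnit (Polynomial.C (algebraMap (Polynomial ℂ) KK d₁.content)) :=
      Polynomial.isUnit_C.mpr (isUnit_iff_ne_zero.mpr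
        (IsFractionRing.to_map_ne_zero_of_mem_nonZeroDivisors
          (mem_nonZeroDivisors_of_ne_zero hcont)))
    have hdvd : ∀ u : Polynomial (Polynomial ℂ), u ≠ 0 → d ∣ φ u → d₂ ∣ u := by
      intro u hu hdu
      have h2 : φ d₁ ∣ φ u := by
        rw [hb', hkunit.mul_left_dvd]
        exact hdu
      have h1 : φ d₂ ∣ φ u := dvd_trans (map_dvd φ d₁.primPart_dvd) h2
      have hucont : IsUnit (Polynomial.C (algebraMap (Polynomial ℂ) KK u.content)) :=
        Polynomial.isUnit_C.mpr (isUnit_iff_ne_zero.mpr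
          (IsFractionRing.to_map_ne_zero_of_mem_nonZeroDivisors
            (mem_nonZeroDivisors_of_ne_zero
              (fun h0 => hu (Polynomial.content_eq_zero_iff.mp h0)))))
      have h3 : φ d₂ ∣ φ u.primPart := by
        have hu' : φ u = Polynomial.C (algebraMap (Polynomial ℂ) KK u.content)
            * φ u.primPart := by
          conv_lhs => rw [show u = Polynomial.C u.content * u.primPart from
            u.eq_C_content_mul_primPart]
          rw [map_mul, hCmap]
        rw [hu'] at h1
        exact (hucont.dvd_mul_left).mp h1
      have h4 : d₂ ∣ u.primPart := by
        apply Polynomial.IsPrimitive.dvd_of_fraction_map_dvd_fraction_map (K := KK) hprim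
        exact h3
      exact h4.trans u.primPart_dvd
    have h5 : IsUnit d₂ := h (hdvd P hP hdP) (hdvd Q hQ hdQ)
    apply hd
    have h6 : Polynomial.C (algebraMap (Polynomial ℂ) KK (b : Polynomial ℂ)) * d
        = Polynomial.C (algebraMap (Polynomial ℂ) KK d₁.content) * φ d₂ := by
      rw [← hb']
      conv_lhs => rw [show d₁ = Polynomial.C d₁.content * d₂ from
        d₁.eq_C_content_mul_primPart]
      rw [map_mul, hCmap]
    have h7 : IsUnit (Polynomial.C (algebraMap (Polynomial ℂ) KK (b : Polynomial ℂ)) * d) := by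
      rw [h6]
      exact hcunit.mul (h5.map φ)
    exact isUnit_of_mul_isUnit_right h7
  have hco : IsCoprime (φ P) (φ Q) := hrel.isCoprime
  obtain ⟨A, B, hAB⟩ := hco
  obtain ⟨b₁, hb₁⟩ := IsLocalization.integerNormalization_map_to_map (Polynomial ℂ)⁰ A
  obtain ⟨b₂, hb₂⟩ := IsLocalization.integerNormalization_map_to_map (Polynomial ℂ)⁰ B
  set a₀ := IsLocalization.integerNormalization (Polynomial ℂ)⁰ A with ha₀
  set b₀ := IsLocalization.integerNormalization (Polynomial ℂ)⁰ B with hb₀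
  refine ⟨a₀ * Polynomial.C (b₂ : Polynomial ℂ), b₀ * Polynomial.C (b₁ : Polynomial ℂ),
    (b₁ : Polynomial ℂ) * (b₂ : Polynomial ℂ),
    mul_ne_zero (nonZeroDivisors.ne_zero b₁.2) (nonZeroDivisors.ne_zero b₂.2), ?_⟩
  apply hinj
  have hφa : φ a₀ = Polynomial.C (algebraMap (Polynomial ℂ) KK (b₁ : Polynomial ℂ)) * A := by
    show Polynomial.map (algebraMap (Polynomial ℂ) KK) a₀ = _
    rw [hb₁, Algebra.smul_def, Polynomial.algebraMap_apply]
  have hφb : φ b₀ = Polynomial.C (algebraMap (Polynomial ℂ) KK (b₂ : Polynomial ℂ)) * B := by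
    show Polynomial.map (algebraMap (Polynomial ℂ) KK) b₀ = _
    rw [hb₂, Algebra.smul_def, Polynomial.algebraMap_apply]
  rw [map_add, map_mul, map_mul, map_mul, map_mul, hCmap, hCmap, hφa, hφb,
    hCmap, show algebraMap (Polynomial ℂ) KK ((b₁ : Polynomial ℂ) * (b₂ : Polynomial ℂ))
      = algebraMap (Polynomial ℂ) KK (b₁ : Polynomial ℂ)
        * algebraMap (Polynomial ℂ) KK (b₂ : Polynomial ℂ) from map_mul _ _ _,
    Polynomial.C_mul]
  linear_combination (Polynomial.C (algebraMap (Polynomial ℂ) KK (b₁ : Polynomial ℂ))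
    * Polynomial.C (algebraMap (Polynomial ℂ) KK (b₂ : Polynomial ℂ))) * hAB


/-- swap the two variables -/
def sw : CPoly2 ≃ₐ[ℂ] CPoly2 := renameEquiv ℂ (Equiv.swap (0 : Fin 2) 1)

lemma sw_sw (x : CPoly2) : sw (sw x) = x := by
  have hsymm : sw.symm = sw := by
    rw [sw, renameEquiv_symm, Equiv.symm_swap]
  calc sw (sw x) = sw (sw.symm x) := by rw [hsymm]
    _ = x := sw.apply_symm_apply x

lemma exists_univar (p q : CPoly2) (hp : p ≠ 0) (hq : q ≠ 0) (h : IsRelPrime p q) :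
    ∃ c : Polynomial ℂ, c ≠ 0 ∧ Polynomial.aeval (X 1 : CPoly2) c ∈ Ideal.span {p, q} := by
  have hne : ∀ u : CPoly2, u ≠ 0 → e u ≠ 0 := by
    intro u hu h0
    exact hu (e.injective (by rw [h0, map_zero]))
  have hrel : IsRelPrime (e p) (e q) := by
    intro d h1 h2
    have h3 : e.symm d ∣ p := by
      obtain ⟨k, hk⟩ := h1
      exact ⟨e.symm k, by apply e.injective; rw [map_mul]; simpa using hk⟩
    have h4 : e.symm d ∣ q := by
      obtain ⟨k, hk⟩ := h2
      exact ⟨e.symm k, by apply e.injective; rw [map_mul]; simpa using hk⟩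
    have h5 := (h h3 h4).map e.toAlgHom
    simpa using h5
  obtain ⟨a, b, c, hc, habc⟩ := exists_univar_poly (e p) (e q) (hne p hp) (hne q hq) hrel
  refine ⟨c, hc, ?_⟩
  have hkey : Polynomial.aeval (X 1 : CPoly2) c = e.symm a * p + e.symm b * q := by
    rw [← e_symm_C, ← habc, map_add, map_mul, map_mul, AlgEquiv.symm_apply_apply,
      AlgEquiv.symm_apply_apply]
  rw [hkey]
  exact Ideal.add_mem _
    (Ideal.mul_mem_left _ _ (Ideal.subset_span (by simp)))
    (Ideal.mul_mem_left _ _ (Ideal.subset_span (by simp)))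

lemma exists_univar0 (p q : CPoly2) (hp : p ≠ 0) (hq : q ≠ 0) (h : IsRelPrime p q) :
    ∃ c : Polynomial ℂ, c ≠ 0 ∧ Polynomial.aeval (X 0 : CPoly2) c ∈ Ideal.span {p, q} := by
  have hne : ∀ u : CPoly2, u ≠ 0 → sw u ≠ 0 := by
    intro u hu h0
    exact hu (sw.injective (by rw [h0, map_zero]))
  have hrel : IsRelPrime (sw p) (sw q) := by
    intro d h1 h2
    have h3 : sw.symm d ∣ p := by
      obtain ⟨k, hk⟩ := h1
      exact ⟨sw.symm k, by apply sw.injective; rw [map_mul]; simpa [sw_sw] using hk⟩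
    have h4 : sw.symm d ∣ q := by
      obtain ⟨k, hk⟩ := h2
      exact ⟨sw.symm k, by apply sw.injective; rw [map_mul]; simpa [sw_sw] using hk⟩
    have h5 := (h h3 h4).map sw.toAlgHom
    simpa using h5
  obtain ⟨c, hc, hmem⟩ := exists_univar (sw p) (sw q) (hne p hp) (hne q hq) hrel
  refine ⟨c, hc, ?_⟩
  obtain ⟨s, t, hst⟩ := Ideal.mem_span_pair.mp hmem
  have happ := congrArg sw hst
  rw [map_add, map_mul, map_mul, sw_sw, sw_sw] at happ
  have hX : sw (Polynomial.aeval (X 1 : CPoly2) c) = Polynomial.aeval (X 0 : CPoly2) c := by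
    rw [show sw (Polynomial.aeval (X 1 : CPoly2) c)
          = Polynomial.aeval (sw (X 1 : CPoly2)) c
        from (Polynomial.aeval_algHom_apply sw.toAlgHom (X 1) c).symm]
    congr 1
    rw [sw, renameEquiv_apply, rename_X, Equiv.swap_apply_right]
  rw [← hX, ← happ]
  exact Ideal.mem_span_pair.mpr ⟨sw s, sw t, rfl⟩

lemma normalize_univ (c : Polynomial ℂ) (hc : c ≠ 0) (x : CPoly2) (I : Ideal CPoly2)
    (hmem : Polynomial.aeval x c ∈ I) :
    ∃ c' : Polynomial ℂ, c'.Monic ∧ 0 < c'.natDegree ∧ Polynomial.aeval x c' ∈ I := by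
  have hm : (c * Polynomial.C c.leadingCoeff⁻¹).Monic :=
    Polynomial.monic_mul_leadingCoeff_inv hc
  refine ⟨c * Polynomial.C c.leadingCoeff⁻¹ * Polynomial.X, hm.mul Polynomial.monic_X, ?_, ?_⟩
  · rw [Polynomial.natDegree_mul hm.ne_zero Polynomial.X_ne_zero, Polynomial.natDegree_X]
    omega
  · rw [map_mul, map_mul]
    exact Ideal.mul_mem_right _ _ (Ideal.mul_mem_right _ _ hmem)

lemma monomial_eq_two (u : Fin 2 →₀ ℕ) (a : ℂ) :
    monomial u a = a • ((X 0 : CPoly2) ^ u 0 * X 1 ^ u 1) := by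
  have hu : Finsupp.single (0 : Fin 2) (u 0) + Finsupp.single 1 (u 1) = u := by
    ext i
    fin_cases i <;> simp [Finsupp.single_apply]
  rw [X_pow_eq_monomial, X_pow_eq_monomial, monomial_mul, one_mul, hu, smul_monomial,
    smul_eq_mul, mul_one]

lemma reduce_step (V : Submodule ℂ CPoly2) (v v' : Fin 2) (c : Polynomial ℂ)
    (hm : c.Monic) (hd : 0 < c.natDegree)
    (hc : ∀ m : CPoly2, m * Polynomial.aeval (X v) c ∈ V)
    (i j : ℕ) (hi : c.natDegree ≤ i)
    (ih : ∀ i' j', i' + j' < i + j → (X v : CPoly2) ^ i' * X v' ^ j' ∈ V) :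
    (X v : CPoly2) ^ i * X v' ^ j ∈ V := by
  set N := c.natDegree with hN
  set r : Polynomial ℂ := c - Polynomial.X ^ N with hr
  have hrdeg : r.natDegree < N := by
    rcases eq_or_ne r 0 with h0 | h0
    · rw [h0]; simpa using hd
    · have hdeg : r.degree < c.degree := by
        apply Polynomial.degree_sub_lt
        · rw [Polynomial.degree_X_pow, Polynomial.degree_eq_natDegree hm.ne_zero]
        · exact hm.ne_zero
        · rw [hm.leadingCoeff, (Polynomial.monic_X_pow N).leadingCoeff]
      rw [Polynomial.degree_eq_natDegree hm.ne_zero] at hdeg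
      exact (Polynomial.natDegree_lt_iff_degree_lt h0).mpr hdeg
  have haev : Polynomial.aeval (X v : CPoly2) r
      = ∑ k ∈ Finset.range N, r.coeff k • (X v : CPoly2) ^ k :=
    Polynomial.aeval_eq_sum_range' hrdeg _
  have hsub : Polynomial.aeval (X v : CPoly2) c - Polynomial.aeval (X v : CPoly2) r
      = (X v : CPoly2) ^ N := by
    rw [← map_sub, show c - r = Polynomial.X ^ N by rw [hr]; ring, map_pow, Polynomial.aeval_X]
  have hterm : ∀ k, ((X v : CPoly2) ^ (i - N) * X v' ^ j) * (r.coeff k • (X v : CPoly2) ^ k)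
      = r.coeff k • ((X v : CPoly2) ^ (i - N + k) * X v' ^ j) := by
    intro k
    rw [mul_smul_comm]
    congr 1
    rw [pow_add]
    ring
  have key : (X v : CPoly2) ^ i * X v' ^ j
      = ((X v : CPoly2) ^ (i - N) * X v' ^ j) * Polynomial.aeval (X v : CPoly2) c
        - ∑ k ∈ Finset.range N, r.coeff k • ((X v : CPoly2) ^ (i - N + k) * X v' ^ j) := by
    calc (X v : CPoly2) ^ i * X v' ^ j
        = ((X v : CPoly2) ^ (i - N) * X v' ^ j) * (X v : CPoly2) ^ N := by
          rw [mul_right_comm, ← pow_add, Nat.sub_add_cancel hi]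
      _ = ((X v : CPoly2) ^ (i - N) * X v' ^ j)
            * (Polynomial.aeval (X v : CPoly2) c - Polynomial.aeval (X v : CPoly2) r) := by
          rw [hsub]
      _ = ((X v : CPoly2) ^ (i - N) * X v' ^ j) * Polynomial.aeval (X v : CPoly2) c
          - ((X v : CPoly2) ^ (i - N) * X v' ^ j) * Polynomial.aeval (X v : CPoly2) r :=
          mul_sub _ _ _
      _ = ((X v : CPoly2) ^ (i - N) * X v' ^ j) * Polynomial.aeval (X v : CPoly2) c
          - ∑ k ∈ Finset.range N, r.coeff k • ((X v : CPoly2) ^ (i - N + k) * X v' ^ j) := by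
          rw [haev, Finset.mul_sum]
          congr 1
          exact Finset.sum_congr rfl fun k _ => hterm k
  rw [key]
  refine sub_mem (hc _) (Submodule.sum_mem _ fun k hk => Submodule.smul_mem _ _ ?_)
  have hkN : k < N := Finset.mem_range.mp hk
  exact ih _ _ (by omega)


lemma isRelPrime_of_relPrime (p q : CPoly2) (hp : p ≠ 0) (h : RelPrime p q) :
    IsRelPrime p q := by
  intro d hdp hdq
  have h0 := h d hdp hdq
  have hd0 : d ≠ 0 := by
    rintro rfl
    exact hp (zero_dvd_iff.mp hdp)
  have hdC : d = C (d.coeff 0) := by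
    ext m
    rcases eq_or_ne m 0 with rfl | hm
    · simp
    · rw [coeff_C, if_neg (Ne.symm hm)]
      by_contra hcne
      apply hm
      ext x
      exact (totalDegree_eq_zero_iff (Fin 2) d).mp h0 m (mem_support_iff.mpr hcne) x
  have ha : d.coeff 0 ≠ 0 := by
    intro h1
    exact hd0 (by rw [hdC, h1, map_zero])
  rw [hdC]
  exact (isUnit_iff_ne_zero.mpr ha).map (C : ℂ →+* CPoly2)

theorem statement1' (p q : CPoly2) (hp : p ≠ 0) (hq : q ≠ 0) (hpq : RelPrime p q) :
    ∃ R : Submodule ℂ CPoly2, FiniteDimensional ℂ R ∧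
      ∀ ψ : CPoly2, ∃ s t : CPoly2, ∃ r ∈ R, ψ = s * p + t * q + r := by
  classical
  have hrel : IsRelPrime p q := isRelPrime_of_relPrime p q hp hpq
  set I : Ideal CPoly2 := Ideal.span {p, q} with hI
  obtain ⟨c₁, hc₁, hmem₁⟩ := exists_univar0 p q hp hq hrel
  obtain ⟨c₂, hc₂, hmem₂⟩ := exists_univar p q hp hq hrel
  obtain ⟨cz, hczm, hczd, hcz⟩ := normalize_univ c₁ hc₁ _ I hmem₁
  obtain ⟨cw, hcwm, hcwd, hcw⟩ := normalize_univ c₂ hc₂ _ I hmem₂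
  set N := cz.natDegree with hN
  set M := cw.natDegree with hM
  set R : Submodule ℂ CPoly2 := Submodule.span ℂ
    (((Finset.range N ×ˢ Finset.range M).image
      (fun ij => (X 0 : CPoly2) ^ ij.1 * X 1 ^ ij.2) : Finset CPoly2) : Set CPoly2) with hR
  refine ⟨R, FiniteDimensional.span_of_finite ℂ (Finset.finite_toSet _), ?_⟩
  set V : Submodule ℂ CPoly2 := R ⊔ I.restrictScalars ℂ with hV
  have hIV : ∀ x ∈ I, x ∈ V := fun x hx => Submodule.mem_sup_right hx
  have hRV : ∀ i j, i < N → j < M → (X 0 : CPoly2) ^ i * X 1 ^ j ∈ V := by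
    intro i j hi hj
    apply Submodule.mem_sup_left
    apply Submodule.subset_span
    rw [Finset.mem_coe, Finset.mem_image]
    exact ⟨(i, j), Finset.mem_product.mpr ⟨Finset.mem_range.mpr hi, Finset.mem_range.mpr hj⟩, rfl⟩
  have key : ∀ n i j, i + j ≤ n → (X 0 : CPoly2) ^ i * X 1 ^ j ∈ V := by
    intro n
    induction n with
    | zero =>
      intro i j hij
      obtain ⟨rfl, rfl⟩ : i = 0 ∧ j = 0 := by omega
      exact hRV 0 0 hczd hcwd
    | succ n ihn =>
      intro i j hij
      rcases Nat.lt_or_ge (i + j) (n + 1) with hlt | _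
      · exact ihn i j (by omega)
      by_cases hi : N ≤ i
      · exact reduce_step V 0 1 cz hczm hczd (fun m => hIV _ (I.mul_mem_left m hcz)) i j hi
          (fun i' j' h' => ihn i' j' (by omega))
      by_cases hj : M ≤ j
      · have hred := reduce_step V 1 0 cw hcwm hcwd (fun m => hIV _ (I.mul_mem_left m hcw)) j i hj
          (fun j' i' h' => by rw [mul_comm]; exact ihn i' j' (by omega))
        rwa [mul_comm] at hred
      · exact hRV i j (by omega) (by omega)
  have hall : ∀ ψ : CPoly2, ψ ∈ V := by
    intro ψ
    induction ψ using MvPolynomial.induction_on' with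
    | monomial u a =>
      rw [monomial_eq_two]
      exact V.smul_mem a (key (u 0 + u 1) _ _ le_rfl)
    | add f g hf hg => exact V.add_mem hf hg
  intro ψ
  obtain ⟨r, hr, x, hx, hψ⟩ := Submodule.mem_sup.mp (hall ψ)
  obtain ⟨s, t, hst⟩ := Ideal.mem_span_pair.mp (show x ∈ I from hx)
  exact ⟨s, t, r, hr, by rw [← hψ, ← hst]; ring⟩

end Statement1Aux

/-- the ideal generated by relatively prime nonzero `p, q` has finite
codimension in `ℂ[z,w]`. -/
theorem statement1 (p q : CPoly2) (hp : p ≠ 0) (hq : q ≠ 0) (hpq : RelPrime p q) :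
    ∃ R : Submodule ℂ CPoly2, FiniteDimensional ℂ R ∧
      ∀ ψ : CPoly2, ∃ s t : CPoly2, ∃ r ∈ R, ψ = s * p + t * q + r := by
  exact Statement1Aux.statement1' p q hp hq hpq
end
end

section
/- Suppose p ∈ ℂ[z,w] is square free and inner toral. If q ∈ ℂ[z,w] is nonzero and q vanishes at all but finitely many points of 𝔙(p), then p divides q. -/
noncomputable section

open MvPolynomial

lemma pevalAt_eq (p : CPoly2) (z w : ℂ) :
    pevalAt p z w =
      Polynomial.eval z (Polynomial.map (MvPolynomial.eval ![w])
        (MvPolynomial.finSuccEquiv ℂ 1 p)) := by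
  exact MvPolynomial.eval_eq_eval_mv_eval' ![w] z p

lemma evalFin1_eq (c : MvPolynomial (Fin 1) ℂ) (w : ℂ) :
    MvPolynomial.eval ![w] c =
      Polynomial.eval w (Polynomial.map (MvPolynomial.eval (![] : Fin 0 → ℂ))
        (MvPolynomial.finSuccEquiv ℂ 0 c)) :=
  MvPolynomial.eval_eq_eval_mv_eval' ![] w c

lemma fin1_eq_zero_of_eval (c : MvPolynomial (Fin 1) ℂ)
    (h : ∀ w, MvPolynomial.eval ![w] c = 0) : c = 0 := by
  apply MvPolynomial.funext
  intro x
  have hx : x = ![x 0] := by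
    funext i; fin_cases i; simp
  rw [map_zero, hx]
  exact h (x 0)

lemma finite_zero_fin1 {c : MvPolynomial (Fin 1) ℂ} (hc : c ≠ 0) :
    {w : ℂ | MvPolynomial.eval ![w] c = 0}.Finite := by
  set g := Polynomial.map (MvPolynomial.eval (![] : Fin 0 → ℂ))
      (MvPolynomial.finSuccEquiv ℂ 0 c) with hg
  have hgne : g ≠ 0 := by
    intro h0
    exact hc (fin1_eq_zero_of_eval c (fun w => by
      rw [evalFin1_eq, ← hg, h0, Polynomial.eval_zero]))
  have he : {w : ℂ | MvPolynomial.eval ![w] c = 0} = {x | g.IsRoot x} := by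
    ext w; simp [Polynomial.IsRoot, evalFin1_eq, ← hg]
  rw [he]
  exact Polynomial.finite_setOf_isRoot hgne

lemma exists_root_fin1 {c : MvPolynomial (Fin 1) ℂ} (h0 : c ≠ 0) (hu : ¬ IsUnit c) :
    ∃ w : ℂ, MvPolynomial.eval ![w] c = 0 := by
  set g := Polynomial.map (MvPolynomial.eval (![] : Fin 0 → ℂ))
      (MvPolynomial.finSuccEquiv ℂ 0 c) with hg
  have hgne : g ≠ 0 := by
    intro h0'
    exact h0 (fin1_eq_zero_of_eval c (fun w => by
      rw [evalFin1_eq, ← hg, h0', Polynomial.eval_zero]))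
  by_cases hdeg : 0 < g.degree
  · obtain ⟨w, hw⟩ := Complex.exists_root hdeg
    exact ⟨w, by rw [evalFin1_eq, ← hg]; exact hw⟩
  · exfalso
    have hk : g = Polynomial.C (g.coeff 0) :=
      Polynomial.eq_C_of_degree_le_zero (le_of_not_gt hdeg)
    have hval : ∀ w, MvPolynomial.eval ![w] c = g.coeff 0 := fun w => by
      rw [evalFin1_eq, ← hg, hk]; simp
    have hsub : c - MvPolynomial.C (g.coeff 0) = 0 := by
      apply fin1_eq_zero_of_eval
      intro w; simp [hval w]
    have hc : c = MvPolynomial.C (g.coeff 0) := sub_eq_zero.mp hsub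
    apply hu
    rw [hc]
    refine IsUnit.map _ (isUnit_iff_ne_zero.mpr ?_)
    intro hk0
    exact hgne (by rw [hk, hk0, map_zero])

lemma innerToral_no_horizontal {r : CPoly2} (hit : InnerToral r) (w₀ : ℂ)
    (h : ∀ z, pevalAt r z w₀ = 0) : False := by
  have h0 := hit 0 w₀ (h 0)
  have h2 := hit 2 w₀ (h 2)
  simp only [norm_zero, Complex.norm_two] at h0 h2
  norm_num at h0 h2
  linarith

lemma natDegree_pos_of_prime_innerToral {r : CPoly2} (hr : Prime r) (hit : InnerToral r) :
    0 < (MvPolynomial.finSuccEquiv ℂ 1 r).natDegree := by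
  by_contra hdeg
  have h0 : (MvPolynomial.finSuccEquiv ℂ 1 r).natDegree = 0 := Nat.le_zero.mp (not_lt.mp hdeg)
  set c := (MvPolynomial.finSuccEquiv ℂ 1 r).coeff 0 with hc
  have hC : MvPolynomial.finSuccEquiv ℂ 1 r = Polynomial.C c :=
    Polynomial.eq_C_of_natDegree_eq_zero h0
  have hr0 : MvPolynomial.finSuccEquiv ℂ 1 r ≠ 0 := by
    intro h
    exact hr.ne_zero ((EmbeddingLike.map_eq_zero_iff).mp h)
  have hcne : c ≠ 0 := by
    intro h'
    exact hr0 (by rw [hC, h', map_zero])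
  have hcu : ¬ IsUnit c := by
    intro hcu
    apply hr.not_unit
    have h1 : IsUnit (MvPolynomial.finSuccEquiv ℂ 1 r) := by
      rw [hC]; exact hcu.map Polynomial.C
    have h2 := h1.map (MvPolynomial.finSuccEquiv ℂ 1).symm
    simpa using h2
  obtain ⟨w₀, hw₀⟩ := exists_root_fin1 hcne hcu
  apply innerToral_no_horizontal hit w₀
  intro z
  rw [pevalAt_eq, hC]
  simp [hw₀]

abbrev R1 : Type := MvPolynomial (Fin 1) ℂ

set_option synthInstance.maxHeartbeats 1000000 in
set_option maxHeartbeats 2000000 in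
lemma bezout_finite {r q : CPoly2} (hr : Prime r) (hit : InnerToral r) (hq : q ≠ 0)
    (hndvd : ¬ r ∣ q) :
    {x : ℂ × ℂ | pevalAt r x.1 x.2 = 0 ∧ pevalAt q x.1 x.2 = 0}.Finite := by
  classical
  letI : NormalizationMonoid R1 := UniqueFactorizationMonoid.normalizationMonoid.toNormalizationMonoid
  letI : NormalizedGCDMonoid R1 := UniqueFactorizationMonoid.toNormalizedGCDMonoid R1
  letI : IsPrincipalIdealRing (Polynomial (FractionRing R1)) :=
    EuclideanDomain.to_principal_ideal_domain (R := Polynomial (FractionRing R1))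
  letI : IsBezout (Polynomial (FractionRing R1)) :=
    IsBezout.of_isPrincipalIdealRing (Polynomial (FractionRing R1))
  have hm := natDegree_pos_of_prime_innerToral hr hit
  have hprime' : Prime (MvPolynomial.finSuccEquiv ℂ 1 r) :=
    (MulEquiv.prime_iff (MvPolynomial.finSuccEquiv ℂ 1).toRingEquiv.toMulEquiv).mpr hr
  have hq' : MvPolynomial.finSuccEquiv ℂ 1 q ≠ 0 := by
    intro h
    exact hq ((EmbeddingLike.map_eq_zero_iff).mp h)
  have hprim : (MvPolynomial.finSuccEquiv ℂ 1 r).IsPrimitive := by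
    intro c hdvd
    obtain ⟨t, ht⟩ := hdvd
    rcases hprime'.irreducible.isUnit_or_isUnit ht with h | h
    · exact Polynomial.isUnit_C.mp h
    · exfalso
      have hC0 : (Polynomial.C c : Polynomial R1) ≠ 0 := by
        rintro h0; rw [h0, zero_mul] at ht; exact hprime'.ne_zero ht
      have ht0 : t ≠ 0 := by
        rintro rfl; rw [mul_zero] at ht; exact hprime'.ne_zero ht
      have h1 : (MvPolynomial.finSuccEquiv ℂ 1 r).natDegree = 0 := by
        rw [ht, Polynomial.natDegree_mul hC0 ht0, Polynomial.natDegree_C,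
          Polynomial.natDegree_eq_zero_of_isUnit h]
      omega
  have hirrK : Irreducible ((MvPolynomial.finSuccEquiv ℂ 1 r).map
      (algebraMap R1 (FractionRing R1))) :=
    (hprim.irreducible_iff_irreducible_map_fraction_map).mp hprime'.irreducible
  have hndvdK : ¬ ((MvPolynomial.finSuccEquiv ℂ 1 r).map (algebraMap R1 (FractionRing R1)) ∣
      (MvPolynomial.finSuccEquiv ℂ 1 q).map (algebraMap R1 (FractionRing R1))) := by
    intro hdvd
    apply hndvd
    have hcont : (MvPolynomial.finSuccEquiv ℂ 1 q) =
        Polynomial.C (MvPolynomial.finSuccEquiv ℂ 1 q).content *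
          (MvPolynomial.finSuccEquiv ℂ 1 q).primPart :=
      Polynomial.eq_C_content_mul_primPart _
    have hcu : IsUnit (Polynomial.C (algebraMap R1 (FractionRing R1)
        (MvPolynomial.finSuccEquiv ℂ 1 q).content)) := by
      rw [Polynomial.isUnit_C]
      refine isUnit_iff_ne_zero.mpr ?_
      intro h0
      have h1 := (map_eq_zero_iff (algebraMap R1 (FractionRing R1))
        (IsFractionRing.injective R1 (FractionRing R1))).mp h0
      exact hq' (by rwa [Polynomial.content_eq_zero_iff] at h1)
    have hmapeq : (MvPolynomial.finSuccEquiv ℂ 1 q).map (algebraMap R1 (FractionRing R1)) =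
        Polynomial.C (algebraMap R1 (FractionRing R1)
            (MvPolynomial.finSuccEquiv ℂ 1 q).content) *
          ((MvPolynomial.finSuccEquiv ℂ 1 q).primPart).map (algebraMap R1 (FractionRing R1)) := by
      conv_lhs => rw [hcont]
      rw [Polynomial.map_mul, Polynomial.map_C]
    have hd : (MvPolynomial.finSuccEquiv ℂ 1 r).map (algebraMap R1 (FractionRing R1)) ∣
        Polynomial.C (algebraMap R1 (FractionRing R1)
            (MvPolynomial.finSuccEquiv ℂ 1 q).content) *
          ((MvPolynomial.finSuccEquiv ℂ 1 q).primPart).map (algebraMap R1 (FractionRing R1)) :=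
      hmapeq ▸ hdvd
    have hdvd2 : (MvPolynomial.finSuccEquiv ℂ 1 r).map (algebraMap R1 (FractionRing R1)) ∣
        ((MvPolynomial.finSuccEquiv ℂ 1 q).primPart).map (algebraMap R1 (FractionRing R1)) := by
      exact (IsUnit.dvd_mul_left (α := Polynomial (FractionRing R1)) hcu).mp hd
    have hdvd3 := hprim.dvd_of_fraction_map_dvd_fraction_map
      hdvd2
    have hdvd4 : (MvPolynomial.finSuccEquiv ℂ 1 r) ∣ (MvPolynomial.finSuccEquiv ℂ 1 q) :=
      hdvd3.trans (Polynomial.primPart_dvd _)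
    have h5 := map_dvd (MvPolynomial.finSuccEquiv ℂ 1).symm hdvd4
    simpa using h5
  have hcop : IsCoprime
      ((MvPolynomial.finSuccEquiv ℂ 1 r).map (algebraMap R1 (FractionRing R1)))
      ((MvPolynomial.finSuccEquiv ℂ 1 q).map (algebraMap R1 (FractionRing R1))) :=
    hirrK.coprime_iff_not_dvd.mpr hndvdK
  obtain ⟨a, b, hab⟩ := hcop
  obtain ⟨d₁, hd₁⟩ := IsLocalization.integerNormalization_map_to_map (nonZeroDivisors R1) a
  obtain ⟨d₂, hd₂⟩ := IsLocalization.integerNormalization_map_to_map (nonZeroDivisors R1) b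
  set A := IsLocalization.integerNormalization (nonZeroDivisors R1) a with hA
  set B := IsLocalization.integerNormalization (nonZeroDivisors R1) b with hB
  have hd₁' : A.map (algebraMap R1 (FractionRing R1)) =
      Polynomial.C (algebraMap R1 (FractionRing R1) (d₁ : R1)) * a := by
    rw [hd₁, Algebra.smul_def, Polynomial.algebraMap_apply]
  have hd₂' : B.map (algebraMap R1 (FractionRing R1)) =
      Polynomial.C (algebraMap R1 (FractionRing R1) (d₂ : R1)) * b := by
    rw [hd₂, Algebra.smul_def, Polynomial.algebraMap_apply]
  have hDne : ((d₁ : R1) * (d₂ : R1)) ≠ 0 :=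
    mul_ne_zero (nonZeroDivisors.ne_zero d₁.2) (nonZeroDivisors.ne_zero d₂.2)
  have key : A * Polynomial.C (d₂ : R1) * (MvPolynomial.finSuccEquiv ℂ 1 r) +
      B * Polynomial.C (d₁ : R1) * (MvPolynomial.finSuccEquiv ℂ 1 q) =
      Polynomial.C ((d₁ : R1) * (d₂ : R1)) := by
    apply Polynomial.map_injective (algebraMap R1 (FractionRing R1))
      (IsFractionRing.injective R1 (FractionRing R1))
    simp only [Polynomial.map_add, Polynomial.map_mul, Polynomial.map_C, hd₁', hd₂', map_mul]
    have hgoal : Polynomial.C (algebraMap R1 (FractionRing R1) (d₁ : R1)) *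
        Polynomial.C (algebraMap R1 (FractionRing R1) (d₂ : R1)) =
        Polynomial.C (algebraMap R1 (FractionRing R1) (d₁ : R1)) *
        Polynomial.C (algebraMap R1 (FractionRing R1) (d₂ : R1)) *
        (a * ((MvPolynomial.finSuccEquiv ℂ 1 r).map (algebraMap R1 (FractionRing R1))) +
         b * ((MvPolynomial.finSuccEquiv ℂ 1 q).map (algebraMap R1 (FractionRing R1)))) := by
      rw [hab, mul_one]
    rw [hgoal]
    ring
  have hWfin : {w : ℂ | MvPolynomial.eval ![w] ((d₁ : R1) * (d₂ : R1)) = 0}.Finite :=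
    finite_zero_fin1 hDne
  have hgsne : ∀ w₀ : ℂ,
      Polynomial.map (MvPolynomial.eval ![w₀]) (MvPolynomial.finSuccEquiv ℂ 1 r) ≠ 0 := by
    intro w₀ h0
    apply innerToral_no_horizontal hit w₀
    intro z
    rw [pevalAt_eq, h0, Polynomial.eval_zero]
  apply Set.Finite.subset (hWfin.biUnion (fun w₀ _ =>
    ((Polynomial.finite_setOf_isRoot (hgsne w₀)).image (fun z => (z, w₀)))))
  rintro ⟨z₀, w₀⟩ ⟨hrz, hqz⟩
  have er : Polynomial.eval z₀ (Polynomial.map (MvPolynomial.eval ![w₀])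
      (MvPolynomial.finSuccEquiv ℂ 1 r)) = 0 := by rw [← pevalAt_eq]; exact hrz
  have eq' : Polynomial.eval z₀ (Polynomial.map (MvPolynomial.eval ![w₀])
      (MvPolynomial.finSuccEquiv ℂ 1 q)) = 0 := by rw [← pevalAt_eq]; exact hqz
  have hw₀ : MvPolynomial.eval ![w₀] ((d₁ : R1) * (d₂ : R1)) = 0 := by
    have hkey := congrArg (fun P : Polynomial R1 =>
      Polynomial.eval z₀ (Polynomial.map (MvPolynomial.eval ![w₀]) P)) key
    simp only [Polynomial.map_add, Polynomial.map_mul, Polynomial.map_C, Polynomial.eval_add,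
      Polynomial.eval_mul, Polynomial.eval_C, er, eq', mul_zero, add_zero, zero_add] at hkey
    exact hkey.symm
  exact Set.mem_biUnion hw₀ ⟨z₀, er, rfl⟩

lemma unitDisk_infinite : {z : ℂ | ‖z‖ < 1}.Infinite := by
  apply Set.infinite_of_injective_forall_mem
    (f := fun n : ℕ => (((n : ℂ) + 2))⁻¹)
  · intro m n h
    simp only at h
    have h2 : (m : ℂ) + 2 ≠ 0 := by
      intro h0
      have := congrArg Complex.re h0
      simp at this
      norm_num at this
      nlinarith [Nat.cast_nonneg (α := ℝ) m]
    have h3 : (n : ℂ) + 2 ≠ 0 := by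
      intro h0
      have := congrArg Complex.re h0
      simp at this
      norm_num at this
      nlinarith [Nat.cast_nonneg (α := ℝ) n]
    have h4 : (m : ℂ) + 2 = (n : ℂ) + 2 := by
      have := congrArg (fun x : ℂ => x⁻¹) h
      simpa [inv_inv] using congrArg (fun x : ℂ => x⁻¹) h
    have h5 : (m : ℂ) = (n : ℂ) := by linear_combination h4
    exact_mod_cast h5
  · intro n
    simp only [Set.mem_setOf_eq, norm_inv]
    have hpos : (0:ℝ) < ‖((n : ℂ) + 2)‖ := by
      have : ((n : ℂ) + 2) ≠ 0 := by
        intro h0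
        have := congrArg Complex.re h0
        simp at this
        norm_num at this
        nlinarith [Nat.cast_nonneg (α := ℝ) n]
      exact norm_pos_iff.mpr this
    rw [inv_lt_one_iff₀]
    right
    have : ‖((n : ℂ) + 2)‖ = ‖((((n : ℕ) + 2 : ℕ) : ℂ))‖ := by push_cast; ring_nf
    rw [this, Complex.norm_natCast]
    exact_mod_cast by omega

lemma distVar_infinite {r : CPoly2} (hr : Prime r) (hit : InnerToral r) :
    (distVar r).Infinite := by
  have hm := natDegree_pos_of_prime_innerToral hr hit
  have hr'0 : MvPolynomial.finSuccEquiv ℂ 1 r ≠ 0 := by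
    intro h
    exact hr.ne_zero ((EmbeddingLike.map_eq_zero_iff).mp h)
  have hc0 : (MvPolynomial.finSuccEquiv ℂ 1 r).leadingCoeff ≠ 0 :=
    Polynomial.leadingCoeff_ne_zero.mpr hr'0
  have hWbad := finite_zero_fin1 hc0
  intro hfin
  have himg : ({z : ℂ | ‖z‖ < 1} \
      {w | MvPolynomial.eval ![w] (MvPolynomial.finSuccEquiv ℂ 1 r).leadingCoeff = 0}) ⊆
      Prod.snd '' distVar r := by
    rintro w₀ ⟨hw1, hw2⟩
    have hcoeff : (Polynomial.map (MvPolynomial.eval ![w₀])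
        (MvPolynomial.finSuccEquiv ℂ 1 r)).coeff
        (MvPolynomial.finSuccEquiv ℂ 1 r).natDegree ≠ 0 := by
      rw [Polynomial.coeff_map]
      exact hw2
    have hgdeg : 0 < (Polynomial.map (MvPolynomial.eval ![w₀])
        (MvPolynomial.finSuccEquiv ℂ 1 r)).degree := by
      have h1 := Polynomial.le_natDegree_of_ne_zero hcoeff
      exact Polynomial.natDegree_pos_iff_degree_pos.mp (lt_of_lt_of_le hm h1)
    obtain ⟨z₀, hz₀⟩ := Complex.exists_root hgdeg
    have hzero : pevalAt r z₀ w₀ = 0 := by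
      rw [pevalAt_eq]; exact hz₀
    have hz1 : ‖z₀‖ < 1 := by
      rcases hit z₀ w₀ hzero with ⟨h, _⟩ | ⟨_, h⟩ | ⟨_, h⟩
      · exact h
      · simp only [Set.mem_setOf_eq] at hw1; rw [h] at hw1; exact absurd hw1 (lt_irrefl 1)
      · simp only [Set.mem_setOf_eq] at hw1; exact absurd (lt_trans h hw1) (lt_irrefl 1)
    exact ⟨(z₀, w₀), ⟨hzero, hz1, hw1⟩, rfl⟩
  exact (unitDisk_infinite.diff hWbad).mono himg (hfin.image Prod.snd)

set_option synthInstance.maxHeartbeats 1000000 in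
set_option maxHeartbeats 2000000 in
/-- if `q ≠ 0` vanishes at all but finitely many points of `𝔙(p)`,
then `p ∣ q`. -/
theorem statement3 (p : CPoly2) (hsf : SqFree p) (hit : InnerToral p)
    (q : CPoly2) (hq : q ≠ 0)
    (hvan : {x ∈ distVar p | pevalAt q x.1 x.2 ≠ 0}.Finite) :
    p ∣ q := by
  classical
  by_contra hndvd
  have hp0 : p ≠ 0 := by
    intro h
    have h02 : pevalAt p 0 2 = 0 := by simp [h, pevalAt]
    rcases hit 0 2 h02 with ⟨_, h1⟩ | ⟨h1, _⟩ | ⟨h1, _⟩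
    · rw [Complex.norm_two] at h1; norm_num at h1
    · rw [norm_zero] at h1; norm_num at h1
    · rw [norm_zero] at h1; norm_num at h1
  have hsq : Squarefree p := by
    intro d hdd
    by_contra hdu
    rcases Nat.eq_zero_or_pos d.totalDegree with h0 | hpos
    · have hd0 : d ≠ 0 := by
        rintro rfl
        rw [mul_zero] at hdd
        exact hp0 (zero_dvd_iff.mp hdd)
      -- d is a nonzero constant, hence a unit
      apply hdu
      have hdC : d = MvPolynomial.C (MvPolynomial.coeff 0 d) := by
        ext m
        by_cases hm : m = 0
        · subst hm; simp
        · rw [MvPolynomial.coeff_C, if_neg (Ne.symm hm)]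
          by_contra hne
          have hmem : m ∈ d.support := MvPolynomial.mem_support_iff.mpr hne
          have := (MvPolynomial.totalDegree_eq_zero_iff (Fin 2) d).mp h0 m hmem
          apply hm
          ext i
          exact this i
      rw [hdC]
      refine IsUnit.map _ (isUnit_iff_ne_zero.mpr ?_)
      intro hc0
      exact hd0 (by rw [hdC, hc0, map_zero])
    · exact hsf d hpos hdd
  letI : NormalizationMonoid CPoly2 := UniqueFactorizationMonoid.normalizationMonoid.toNormalizationMonoid
  letI : NormalizedGCDMonoid CPoly2 := UniqueFactorizationMonoid.toNormalizedGCDMonoid CPoly2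
  obtain ⟨h, hph⟩ : gcd p q ∣ p := gcd_dvd_left p q
  have hgq : gcd p q ∣ q := gcd_dvd_right p q
  have hh0 : h ≠ 0 := by
    rintro rfl
    rw [mul_zero] at hph
    exact hp0 hph
  have hhu : ¬ IsUnit h := by
    intro hu
    apply hndvd
    have hassoc : Associated (gcd p q) p := ⟨hu.unit, by rw [IsUnit.unit_spec, ← hph]⟩
    exact (hassoc.symm.dvd).trans hgq
  obtain ⟨r, hrirr, hrh⟩ := WfDvdMonoid.exists_irreducible_factor hhu hh0
  have hrprime : Prime r := (UniqueFactorizationMonoid.irreducible_iff_prime).mp hrirr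
  have hrp : r ∣ p := hrh.trans (Dvd.intro_left (gcd p q) hph.symm)
  have hrq : ¬ r ∣ q := by
    intro hrq
    have hrg : r ∣ gcd p q := dvd_gcd hrp hrq
    obtain ⟨t, ht⟩ := hrh
    obtain ⟨s, hs⟩ := hrg
    have : r * r ∣ p := ⟨s * t, by rw [hph, hs, ht]; ring⟩
    exact hrirr.not_isUnit (hsq r this)
  have hitr : InnerToral r := by
    intro z w hzw
    obtain ⟨t, ht⟩ := hrp
    apply hit z w
    have : pevalAt p z w = pevalAt r z w * pevalAt t z w := by
      rw [ht, pevalAt, pevalAt, pevalAt, map_mul]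
    rw [this, hzw, zero_mul]
  have hinf := distVar_infinite hrprime hitr
  have hfinB := bezout_finite hrprime hitr hq hrq
  apply hinf
  apply Set.Finite.subset (hvan.union hfinB)
  rintro ⟨z, w⟩ ⟨hz, hb⟩
  have hpz : pevalAt p z w = 0 := by
    obtain ⟨t, ht⟩ := hrp
    have : pevalAt p z w = pevalAt r z w * pevalAt t z w := by
      rw [ht, pevalAt, pevalAt, pevalAt, map_mul]
    rw [this, hz, zero_mul]
  by_cases hqz : pevalAt q z w = 0
  · exact Or.inr ⟨hz, hqz⟩
  · exact Or.inl ⟨⟨hpz, hb⟩, hqz⟩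
end
end

section
/- Suppose p ∈ ℂ[z,w] is square free and inner toral and q ∈ ℂ[z,w] is nonzero. If Z(q) ∩ Z(p) ∩ 𝔻² is a finite set, then q and p are relatively prime. -/
noncomputable section

open MvPolynomial

section Aux

def Psi : CPoly2 →ₐ[ℂ] Polynomial (Polynomial ℂ) :=
  MvPolynomial.aeval ![Polynomial.C Polynomial.X, Polynomial.X]

lemma eval_pSlice (d : CPoly2) (lam w : ℂ) :
    Polynomial.eval w (pSlice d lam) = pevalAt d lam w := by
  have h : (Polynomial.aeval w : Polynomial ℂ →ₐ[ℂ] ℂ).comp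
      (MvPolynomial.aeval ![Polynomial.C lam, Polynomial.X])
      = MvPolynomial.aeval ![lam, w] := by
    apply MvPolynomial.algHom_ext
    intro i
    fin_cases i <;> simp
  have h2 := congrArg (fun f : CPoly2 →ₐ[ℂ] ℂ => f d) h
  simp only [AlgHom.comp_apply] at h2
  have h3 : (MvPolynomial.aeval ![lam, w] : CPoly2 →ₐ[ℂ] ℂ) d
      = MvPolynomial.eval ![lam, w] d := by
    simp [MvPolynomial.aeval_def, MvPolynomial.eval_eq, MvPolynomial.eval₂_eq,
      Algebra.algebraMap_self]
  have h4 : Polynomial.aeval w (pSlice d lam) = Polynomial.eval w (pSlice d lam) := by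
    rw [Polynomial.aeval_def, Polynomial.eval, Algebra.algebraMap_self]
  rw [pevalAt, ← h3, ← h2]
  exact h4.symm

lemma pSlice_eq_map (d : CPoly2) (lam : ℂ) :
    pSlice d lam = Polynomial.map (Polynomial.evalRingHom lam) (Psi d) := by
  have h : (Polynomial.mapAlgHom (Polynomial.aeval lam : Polynomial ℂ →ₐ[ℂ] ℂ)).comp Psi
      = (MvPolynomial.aeval ![Polynomial.C lam, Polynomial.X] : CPoly2 →ₐ[ℂ] Polynomial ℂ) := by
    apply MvPolynomial.algHom_ext
    intro i
    fin_cases i <;>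
      simp [Psi, Polynomial.mapAlgHom, Polynomial.coe_aeval_eq_evalRingHom]
  have h2 := congrArg (fun f : CPoly2 →ₐ[ℂ] Polynomial ℂ => f d) h
  simp only [AlgHom.comp_apply] at h2
  rw [pSlice, ← h2]
  simp [Polynomial.mapAlgHom, Polynomial.coe_aeval_eq_evalRingHom]

lemma Psi_injective : Function.Injective (Psi : CPoly2 →ₐ[ℂ] Polynomial (Polynomial ℂ)) := by
  have h : Function.LeftInverse
      (Polynomial.eval₂ ((Polynomial.aeval (X 0 : CPoly2)).toRingHom) (X 1)) Psi := by
    intro d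
    have : (Polynomial.eval₂RingHom ((Polynomial.aeval (X 0 : CPoly2)).toRingHom)
        (X 1)).comp (Psi : CPoly2 →+* Polynomial (Polynomial ℂ)) = RingHom.id _ := by
      apply MvPolynomial.ringHom_ext
      · intro r; simp [Psi]
      · intro i; fin_cases i <;> simp [Psi]
    have := congrArg (fun f : CPoly2 →+* CPoly2 => f d) this
    simpa using this
  exact h.injective

lemma peval_dvd_zero {d f : CPoly2} (h : d ∣ f) {z w : ℂ} (h0 : pevalAt d z w = 0) :
    pevalAt f z w = 0 := by
  obtain ⟨r, rfl⟩ := h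
  unfold pevalAt at *
  rw [map_mul, h0, zero_mul]

lemma ball_infinite : {l : ℂ | ‖l‖ < 1}.Infinite := by
  apply Set.infinite_of_injective_forall_mem (f := fun n : ℕ => ((n : ℂ) + 2)⁻¹)
  · intro m n h
    have hm : (m : ℂ) + 2 ≠ 0 := by
      intro hc
      have := congrArg Complex.re hc
      simp at this
      nlinarith [this]
    have hn : (n : ℂ) + 2 ≠ 0 := by
      intro hc
      have := congrArg Complex.re hc
      simp at this
      nlinarith [this]
    have : (m : ℂ) + 2 = (n : ℂ) + 2 := by
      field_simp at h
      exact h.symm ▸ rfl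
    have : (m : ℂ) = (n : ℂ) := by linear_combination this
    exact_mod_cast this
  · intro n
    simp only [Set.mem_setOf_eq, norm_inv]
    rw [inv_lt_one_iff₀]
    right
    calc (1 : ℝ) < 2 := one_lt_two
    _ ≤ ‖(n : ℂ) + 2‖ := by
        have h1 := Complex.abs_re_le_norm ((n : ℂ) + 2)
        simp at h1
        have h2 : |(n : ℝ) + 2| = (n : ℝ) + 2 := abs_of_nonneg (by positivity)
        have h3 : (0 : ℝ) ≤ (n : ℝ) := Nat.cast_nonneg n
        linarith

end Aux

/-- if `Z(q) ∩ Z(p) ∩ 𝔻²` is finite, then `q` and `p` are relatively prime. -/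
theorem statement4 (p q : CPoly2) (hsf : SqFree p) (hit : InnerToral p) (hq : q ≠ 0)
    (hfin : (zeroSet q ∩ zeroSet p ∩ biDisk).Finite) :
    RelPrime q p := by
  intro d hdq hdp
  classical
  by_contra hdeg
  have hdpos : 0 < d.totalDegree := Nat.pos_of_ne_zero hdeg
  have hd0 : d ≠ 0 := by
    rintro rfl
    simp [MvPolynomial.totalDegree_zero] at hdpos
  set e := Psi d with he
  have he0 : e ≠ 0 := by
    intro h
    exact hd0 (Psi_injective (by simpa using h))
  -- zeros of d in the open disk slice give points of the intersection
  have key : ∀ z w : ℂ, pevalAt d z w = 0 → ‖z‖ < 1 →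
      (z, w) ∈ zeroSet q ∩ zeroSet p ∩ biDisk := by
    intro z w h0 hz
    have hp0 : pevalAt p z w = 0 := peval_dvd_zero hdp h0
    have hq0 : pevalAt q z w = 0 := peval_dvd_zero hdq h0
    have hw : ‖w‖ < 1 := by
      rcases hit z w hp0 with h | h | h
      · exact h.2
      · linarith [h.1]
      · linarith [h.1]
    exact ⟨⟨hq0, hp0⟩, hz, hw⟩
  by_cases hn : e.natDegree = 0
  · -- d depends only on z; get a vertical line in Z(p), contradiction
    obtain ⟨a, ha⟩ := Polynomial.natDegree_eq_zero.mp hn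
    have hapos : a.natDegree ≠ 0 := by
      intro h0
      obtain ⟨c, hc⟩ := Polynomial.natDegree_eq_zero.mp h0
      have hdc : d = MvPolynomial.C c := by
        apply Psi_injective
        rw [← he, ← ha, ← hc]
        simp [Psi]
      rw [hdc] at hdpos
      simp at hdpos
    have hadeg : 0 < a.degree :=
      Polynomial.natDegree_pos_iff_degree_pos.mp (Nat.pos_of_ne_zero hapos)
    obtain ⟨c, hc⟩ := Complex.exists_root hadeg
    have hall : ∀ w : ℂ, pevalAt d c w = 0 := by
      intro w
      rw [← eval_pSlice, pSlice_eq_map, ← he, ← ha]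
      simp only [Polynomial.map_C, Polynomial.eval_C, Polynomial.coe_evalRingHom]
      simpa using hc
    have h1 := hit c 0 (peval_dvd_zero hdp (hall 0))
    have h2 := hit c 2 (peval_dvd_zero hdp (hall 2))
    have habs2 : ‖(2 : ℂ)‖ = 2 := by simp
    simp only [norm_zero, habs2] at h1 h2
    rcases h1 with h1 | h1 | h1 <;> rcases h2 with h2 | h2 | h2 <;>
      first
        | linarith [h1.1, h1.2, h2.1, h2.2]
        | (exfalso; norm_num at h1 h2)
  · -- main case: slice at generic λ has a root
    have hepos : 0 < e.degree :=
      Polynomial.natDegree_pos_iff_degree_pos.mp (Nat.pos_of_ne_zero hn)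
    have ha0 : e.leadingCoeff ≠ 0 := Polynomial.leadingCoeff_ne_zero.mpr he0
    set S : Set ℂ := {l | ‖l‖ < 1} \ {l | (e.leadingCoeff).eval l = 0}
      with hS
    have hSinf : S.Infinite :=
      ball_infinite.diff (Polynomial.finite_setOf_isRoot ha0)
    have hex : ∀ l ∈ S, ∃ w : ℂ, pevalAt d l w = 0 := by
      intro l hl
      have hlc : (Polynomial.evalRingHom l) e.leadingCoeff ≠ 0 := hl.2
      have hdegmap : (pSlice d l).degree = e.degree := by
        rw [pSlice_eq_map, ← he]
        exact Polynomial.degree_map_eq_of_leadingCoeff_ne_zero _ hlc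
      obtain ⟨w, hw⟩ := Complex.exists_root (f := pSlice d l) (by rw [hdegmap]; exact hepos)
      exact ⟨w, by rw [← eval_pSlice]; exact hw⟩
    set F : ℂ → ℂ × ℂ := fun l =>
      (l, if h : ∃ w : ℂ, pevalAt d l w = 0 then h.choose else 0) with hF
    have hmem : ∀ l ∈ S, F l ∈ zeroSet q ∩ zeroSet p ∩ biDisk := by
      intro l hl
      have h := hex l hl
      have h0 : pevalAt d l (F l).2 = 0 := by
        simp only [hF, dif_pos h]
        exact h.choose_spec
      exact key l (F l).2 h0 hl.1
    have hinj : Set.InjOn F S := fun x _ y _ hxy => congrArg Prod.fst hxy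
    have : (zeroSet q ∩ zeroSet p ∩ biDisk).Infinite := by
      apply Set.Infinite.mono (s := F '' S)
      · intro x hx
        obtain ⟨l, hl, rfl⟩ := hx
        exact hmem l hl
      · exact hSinf.image hinj
    exact this hfin
end
end

section
/- Let p ∈ ℂ[z,w] be square free and inner toral. Suppose V = (S,T) is a pure p-isopair of finite bimultiplicity acting on a Hilbert space K. If H is a closed V-invariant subspace of K of finite codimension and W is the restriction of V to H, then there exists a closed W-invariant subspace L of H of finite codimension such that V is unitarily equivalent to the restriction of W to L. -/
noncomputable section

open MvPolynomial

open Filter ContinuousLinearMap Polynomial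

namespace St12Aux

variable {K : Type*} [NormedAddCommGroup K] [InnerProductSpace ℂ K] [CompleteSpace K]

local notation "⟪" x ", " y "⟫" => @inner ℂ _ _ x y

variable {S : K →L[ℂ] K}

omit [CompleteSpace K] in
lemma norm_pow (hS : ∀ x, ‖S x‖ = ‖x‖) (n : ℕ) (x : K) : ‖(S ^ n) x‖ = ‖x‖ := by
  induction n generalizing x with
  | zero => simp
  | succ n ih => rw [pow_succ, mul_apply_eq_comp, ih, hS]

omit [CompleteSpace K] in
lemma inner_map (hS : ∀ x, ‖S x‖ = ‖x‖) (x y : K) : ⟪S x, S y⟫ = ⟪x, y⟫ :=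
  (⟨S.toLinearMap, hS⟩ : K →ₗᵢ[ℂ] K).inner_map_map x y

omit [CompleteSpace K] in
lemma inner_map_pow (hS : ∀ x, ‖S x‖ = ‖x‖) (n : ℕ) (x y : K) :
    ⟪(S ^ n) x, (S ^ n) y⟫ = ⟪x, y⟫ := by
  induction n generalizing x y with
  | zero => simp
  | succ n ih => rw [pow_succ, mul_apply_eq_comp, mul_apply_eq_comp, ih, inner_map hS]

lemma adjoint_comp_self (hS : ∀ x, ‖S x‖ = ‖x‖) (x : K) : adjoint S (S x) = x := by
  refine ext_inner_right ℂ fun v => ?_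
  rw [adjoint_inner_left, inner_map hS]

omit [CompleteSpace K] in
lemma norm_le_one (hS : ∀ x, ‖S x‖ = ‖x‖) : ‖S‖ ≤ 1 :=
  S.opNorm_le_bound zero_le_one (fun x => by rw [hS, one_mul])

lemma adjoint_pow_apply (n : ℕ) (f : K) : ((adjoint S) ^ n) f = adjoint (S ^ n) f := by
  rw [← star_eq_adjoint, ← star_eq_adjoint, ← star_pow]

/-- Key analytic lemma: for a pure isometry, powers of the adjoint tend to zero strongly. -/
lemma adjoint_pow_tendsto_zero (hS : ∀ x, ‖S x‖ = ‖x‖)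
    (hpure : (⋂ n : ℕ, Set.range (⇑(S ^ (n + 1)))) = ({0} : Set K)) (f : K) :
    Tendsto (fun n => ‖((adjoint S) ^ n) f‖) atTop (nhds 0) := by
  set Sd := adjoint S with hSd
  set d : ℕ → ℝ := fun n => ‖(Sd ^ n) f‖ with hd
  set g : ℕ → K := fun n => (S ^ n) ((Sd ^ n) f) with hg
  have hnormg : ∀ n, ‖g n‖ = d n := fun n => norm_pow hS n _
  -- inner products
  have hadj_pow : ∀ (k : ℕ) (v : K), adjoint (S ^ k) v = (Sd ^ k) v := by
    intro k v; rw [adjoint_pow_apply]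
  have hinner : ∀ m n, m ≤ n → ⟪g n, g m⟫ = ((d n : ℂ)) ^ 2 := by
    intro m n hmn
    have h1 : S ^ n = (S ^ m) * (S ^ (n - m)) := by
      rw [← pow_add]; congr 1; omega
    have h2 : (Sd ^ (n - m)) ((Sd ^ m) f) = (Sd ^ n) f := by
      rw [← mul_apply_eq_comp (F := K →L[ℂ] K), ← pow_add]; congr 2; omega
    calc ⟪g n, g m⟫ = ⟪(S ^ m) ((S ^ (n-m)) ((Sd ^ n) f)), (S ^ m) ((Sd ^ m) f)⟫ := by
          simp only [hg, h1, mul_apply_eq_comp]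
      _ = ⟪(S ^ (n-m)) ((Sd ^ n) f), (Sd ^ m) f⟫ := inner_map_pow hS m _ _
      _ = ⟪(Sd ^ n) f, adjoint (S ^ (n-m)) ((Sd ^ m) f)⟫ := by
          rw [← adjoint_inner_right]
      _ = ⟪(Sd ^ n) f, (Sd ^ n) f⟫ := by rw [hadj_pow, h2]
      _ = ((d n : ℂ)) ^ 2 := by rw [inner_self_eq_norm_sq_to_K]; norm_cast
  have hdanti : Antitone d := by
    refine antitone_nat_of_succ_le fun n => ?_
    have : (Sd ^ (n+1)) f = Sd ((Sd ^ n) f) := by rw [pow_succ', mul_apply_eq_comp]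
    rw [hd]; simp only [this]
    calc ‖Sd ((Sd ^ n) f)‖ ≤ ‖Sd‖ * ‖(Sd ^ n) f‖ := le_opNorm _ _
      _ ≤ 1 * ‖(Sd ^ n) f‖ := by
          apply mul_le_mul_of_nonneg_right _ (norm_nonneg _)
          rw [hSd]
          calc ‖adjoint S‖ = ‖S‖ := by
                exact (ContinuousLinearMap.adjoint : (K →L[ℂ] K) ≃ₗᵢ⋆[ℂ] (K →L[ℂ] K)).norm_map S
            _ ≤ 1 := norm_le_one hS
      _ = ‖(Sd ^ n) f‖ := one_mul _
  -- e = d^2 converges hence is Cauchy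
  set e : ℕ → ℝ := fun n => (d n) ^ 2 with he
  have heanti : Antitone e := fun m n h => by
    simp only [he]; exact pow_le_pow_left₀ (norm_nonneg _) (hdanti h) 2
  have hebdd : BddBelow (Set.range e) := ⟨0, by rintro _ ⟨n, rfl⟩; positivity⟩
  have hecauchy : CauchySeq e := (tendsto_atTop_ciInf heanti hebdd).cauchySeq
  have hgsub : ∀ m n, m ≤ n → ‖g n - g m‖ ^ 2 = e m - e n := by
    intro m n hmn
    have h1 := norm_sub_sq (𝕜 := ℂ) (g n) (g m)
    rw [hinner m n hmn] at h1
    rw [h1, hnormg, hnormg]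
    have : RCLike.re (((d n : ℂ)) ^ 2) = e n := by
      norm_cast
    rw [this]; simp only [he]; ring
  have hgcauchy : CauchySeq g := by
    rw [Metric.cauchySeq_iff]
    intro ε hε
    obtain ⟨N, hN⟩ := Metric.cauchySeq_iff.1 hecauchy (ε ^ 2) (by positivity)
    refine ⟨N, fun m hm n hn => ?_⟩
    rcases le_total n m with h | h
    · have := hgsub n m h
      have h2 : dist (g m) (g n) ^ 2 = e n - e m := by rw [dist_eq_norm]; exact this
      have h3 : e n - e m < ε ^ 2 := by
        have := hN n hn m hm
        rw [Real.dist_eq] at this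
        exact lt_of_le_of_lt (le_abs_self _) this
      nlinarith [dist_nonneg (x := g m) (y := g n)]
    · have := hgsub m n h
      have h2 : dist (g m) (g n) ^ 2 = e m - e n := by
        rw [dist_comm, dist_eq_norm]; exact this
      have h3 : e m - e n < ε ^ 2 := by
        have := hN m hm n hn
        rw [Real.dist_eq] at this
        exact lt_of_le_of_lt (le_abs_self _) this
      nlinarith [dist_nonneg (x := g m) (y := g n)]
  obtain ⟨G, hG⟩ := cauchySeq_tendsto_of_complete hgcauchy
  have hGmem : ∀ m : ℕ, G ∈ Set.range (⇑(S ^ (m + 1))) := by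
    intro m
    have hclosed : IsClosed (Set.range (⇑(S ^ (m+1)))) := by
      have : Isometry (⇑(S ^ (m+1))) :=
        AddMonoidHomClass.isometry_of_norm _ (norm_pow hS (m+1))
      exact this.isClosedEmbedding.isClosed_range
    refine hclosed.mem_of_tendsto hG (eventually_atTop.2 ⟨m + 1, fun n hn => ?_⟩)
    have h1 : S ^ n = (S ^ (m+1)) * (S ^ (n - (m+1))) := by
      rw [← pow_add]; congr 1; omega
    exact ⟨(S ^ (n - (m+1))) ((Sd ^ n) f), by rw [hg]; simp only [h1, mul_apply_eq_comp]⟩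
  have hG0 : G = 0 := by
    have : G ∈ (⋂ n : ℕ, Set.range (⇑(S ^ (n + 1)))) := Set.mem_iInter.2 hGmem
    rw [hpure] at this; exact this
  -- e n = re ⟪g n, f⟫ → 0
  have hef : ∀ n, e n = RCLike.re ⟪g n, f⟫ := by
    intro n
    have : ⟪g n, f⟫ = ⟪(Sd ^ n) f, (Sd ^ n) f⟫ := by
      rw [hg, ← adjoint_inner_right, hadj_pow]
    rw [this, inner_self_eq_norm_sq_to_K]
    norm_cast
  have hetends : Tendsto e atTop (nhds 0) := by
    have h1 : Tendsto (fun n => ⟪g n, f⟫) atTop (nhds ⟪G, f⟫) :=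
      (hG.inner tendsto_const_nhds)
    rw [hG0, inner_zero_left] at h1
    have h2 : Tendsto (fun n => RCLike.re ⟪g n, f⟫) atTop (nhds (RCLike.re (0:ℂ))) :=
      (RCLike.continuous_re.tendsto _).comp h1
    rw [map_zero] at h2
    exact h2.congr (fun n => (hef n).symm)
  have : Tendsto (fun n => Real.sqrt (e n)) atTop (nhds (Real.sqrt 0)) :=
    (Real.continuous_sqrt.tendsto _).comp hetends
  rw [Real.sqrt_zero] at this
  refine this.congr fun n => ?_
  rw [he]; exact Real.sqrt_sq (norm_nonneg _)

end St12Aux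


namespace St12Aux2

variable {K : Type*} [NormedAddCommGroup K] [InnerProductSpace ℂ K] [CompleteSpace K]

local notation "⟪" x ", " y "⟫" => @inner ℂ _ _ x y

omit [CompleteSpace K] in
/-- Two-factor codimension lemma. -/
lemma findim_quot_range_mul (X Y : K →L[ℂ] K)
    (hX : FiniteDimensional ℂ (K ⧸ LinearMap.range (X : K →ₗ[ℂ] K)))
    (hY : FiniteDimensional ℂ (K ⧸ LinearMap.range (Y : K →ₗ[ℂ] K))) :
    FiniteDimensional ℂ (K ⧸ LinearMap.range ((X * Y : K →L[ℂ] K) : K →ₗ[ℂ] K)) := by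
  set N : Submodule ℂ K := LinearMap.range ((X * Y : K →L[ℂ] K) : K →ₗ[ℂ] K) with hN
  have hle : N ≤ LinearMap.range (X : K →ₗ[ℂ] K) := by
    rintro _ ⟨x, rfl⟩
    exact ⟨Y x, rfl⟩
  set q : (K ⧸ N) →ₗ[ℂ] (K ⧸ LinearMap.range (X : K →ₗ[ℂ] K)) :=
    Submodule.mapQ N (LinearMap.range (X : K →ₗ[ℂ] K)) LinearMap.id
      (fun x hx => by simpa using hle hx) with hq
  set Abar : (K ⧸ LinearMap.range (Y : K →ₗ[ℂ] K)) →ₗ[ℂ] (K ⧸ N) :=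
    Submodule.mapQ (LinearMap.range (Y : K →ₗ[ℂ] K)) N (X : K →ₗ[ℂ] K)
      (by rintro _ ⟨y, rfl⟩; exact ⟨y, rfl⟩) with hAbar
  have hker : LinearMap.ker q ≤ LinearMap.range Abar := by
    intro z hz
    obtain ⟨x, rfl⟩ := Submodule.Quotient.mk_surjective N z
    have h0 : (Submodule.Quotient.mk x : K ⧸ LinearMap.range (X : K →ₗ[ℂ] K)) = 0 := by
      simpa [hq, Submodule.mapQ_apply] using hz
    rw [Submodule.Quotient.mk_eq_zero] at h0
    obtain ⟨y, rfl⟩ := h0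
    exact ⟨Submodule.Quotient.mk y, by simp [hAbar, Submodule.mapQ_apply]⟩
  haveI : FiniteDimensional ℂ (LinearMap.range Abar) := inferInstance
  haveI hkfd : FiniteDimensional ℂ (LinearMap.ker q) :=
    Submodule.finiteDimensional_of_le hker
  rw [show (FiniteDimensional ℂ (K ⧸ N)) = Module.Finite ℂ (K ⧸ N) from rfl,
    ← Module.rank_lt_aleph0_iff]
  have hrk := Submodule.rank_quotient_add_rank (LinearMap.ker q)
  rw [← hrk]
  refine Cardinal.add_lt_aleph0 ?_ ?_
  · rw [(LinearMap.quotKerEquivRange q).rank_eq]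
    exact Module.rank_lt_aleph0_iff.2 inferInstance
  · exact Module.rank_lt_aleph0_iff.2 hkfd

variable {S : K →L[ℂ] K}

/-- Base codimension lemma: `K ⧸ range (S - a)` is finite-dimensional. -/
lemma findim_quot_range_sub (hS : ∀ x, ‖S x‖ = ‖x‖)
    (hker : FiniteDimensional ℂ (LinearMap.ker (adjoint S : K →ₗ[ℂ] K))) {a : ℂ} (ha : ‖a‖ < 1) :
    FiniteDimensional ℂ (K ⧸ LinearMap.range ((S - a • (1 : K →L[ℂ] K) : K →L[ℂ] K) : K →ₗ[ℂ] K)) := by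
  set A : K →L[ℂ] K := S - a • 1 with hA
  have hSnorm : ‖S‖ ≤ 1 := S.opNorm_le_bound zero_le_one (fun x => by rw [hS, one_mul])
  have hbound : ∀ x, ‖x‖ ≤ ((1 - ‖a‖)⁻¹).toNNReal * ‖A x‖ := by
    intro x
    have h1 : ‖A x‖ ≥ (1 - ‖a‖) * ‖x‖ := by
      have : A x = S x - a • x := by simp [hA, sub_apply, smul_apply, one_apply]
      rw [this]
      calc ‖S x - a • x‖ ≥ ‖S x‖ - ‖a • x‖ := norm_sub_norm_le _ _
        _ = (1 - ‖a‖) * ‖x‖ := by rw [hS, norm_smul]; ring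
    have hpos : (0:ℝ) < 1 - ‖a‖ := by linarith
    have h2 : ((1 - ‖a‖)⁻¹).toNNReal = ((1 - ‖a‖)⁻¹ : ℝ) := by
      rw [Real.coe_toNNReal]; positivity
    rw [h2, inv_mul_eq_div, le_div_iff₀ hpos]
    nlinarith [norm_nonneg (A x)]
  have hanti : AntilipschitzWith _ A := A.antilipschitz_of_bound hbound
  have hclosed : IsClosed (Set.range ⇑A) := hanti.isClosed_range A.uniformContinuous
  set U : Submodule ℂ K := LinearMap.range (A : K →ₗ[ℂ] K) with hU
  have hUclosed : IsClosed (U : Set K) := by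
    rw [hU, LinearMap.coe_range]; exact hclosed
  haveI : CompleteSpace U := hUclosed.completeSpace_coe
  have hcompl : IsCompl U Uᗮ := Submodule.isCompl_orthogonal_of_hasOrthogonalProjection
  have equiv := Submodule.quotientEquivOfIsCompl U Uᗮ hcompl
  -- U^⊥ embeds into ker (adjoint S)
  have hmem : ∀ f : K, f ∈ Uᗮ → adjoint S f = (starRingEnd ℂ a) • f := by
    intro f hf
    have h0 : adjoint A f = 0 := by
      refine ext_inner_right ℂ fun v => ?_
      rw [adjoint_inner_left, inner_zero_left]
      have := (Submodule.mem_orthogonal U f).1 hf (A v) ⟨v, rfl⟩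
      rw [← inner_conj_symm, this, map_zero]
    have hadjA : adjoint A = adjoint S - (starRingEnd ℂ a) • 1 := by
      rw [← star_eq_adjoint, ← star_eq_adjoint, hA, star_sub, star_smul, star_one]
      rfl
    rw [hadjA] at h0
    have := sub_eq_zero.1 (by simpa [sub_apply, smul_apply, one_apply] using h0)
    simpa using this
  set Dm : K →L[ℂ] K := 1 - (starRingEnd ℂ a) • S with hDm
  have hDmnorm : ‖(starRingEnd ℂ a) • S‖ < 1 := by
    rw [norm_smul, RCLike.norm_conj]
    calc ‖a‖ * ‖S‖ ≤ ‖a‖ * 1 := by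
          exact mul_le_mul_of_nonneg_left hSnorm (norm_nonneg a)
      _ < 1 := by rw [mul_one]; exact ha
  set un : (K →L[ℂ] K)ˣ := Units.oneSub _ hDmnorm with hun
  have hmemker : ∀ f : Uᗮ, Dm (f : K) ∈ LinearMap.ker (adjoint S : K →ₗ[ℂ] K) := by
    intro f
    rw [LinearMap.mem_ker, ContinuousLinearMap.coe_coe]
    have h1 : Dm (f : K) = (f : K) - (starRingEnd ℂ a) • S (f : K) := by
      simp [hDm, sub_apply, smul_apply, one_apply]
    rw [h1, map_sub, map_smul, hmem _ f.2]
    have h2 : adjoint S (S (f : K)) = (f : K) := by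
      refine ext_inner_right ℂ fun v => ?_
      rw [adjoint_inner_left]
      exact (⟨S.toLinearMap, hS⟩ : K →ₗᵢ[ℂ] K).inner_map_map _ _
    rw [h2]
    exact sub_self _
  set Ψ : Uᗮ →ₗ[ℂ] (LinearMap.ker (adjoint S : K →ₗ[ℂ] K)) :=
    LinearMap.codRestrict (LinearMap.ker (adjoint S : K →ₗ[ℂ] K))
      ((Dm : K →ₗ[ℂ] K) ∘ₗ Uᗮ.subtype) (fun f => hmemker f) with hΨ
  have hinj : Function.Injective Ψ := by
    intro f g hfg
    have h1 : Dm (f : K) = Dm (g : K) := by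
      have := congrArg (Subtype.val) hfg
      exact this
    have h2 : (f : K) = (g : K) := by
      have : ((un : K →L[ℂ] K) : K → K) (f : K) = ((un : K →L[ℂ] K) : K → K) (g : K) := h1
      have h3 := congrArg (fun z => ((un⁻¹ : (K →L[ℂ] K)ˣ) : K →L[ℂ] K) z) this
      simpa [← mul_apply_eq_comp (F := K →L[ℂ] K), un.inv_mul] using h3
    exact Subtype.ext h2
  haveI : FiniteDimensional ℂ Uᗮ := FiniteDimensional.of_injective Ψ hinj
  exact Module.Finite.equiv equiv.symm

end St12Aux2


namespace St12Aux3

variable {K : Type*} [NormedAddCommGroup K] [InnerProductSpace ℂ K] [CompleteSpace K]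

local notation "⟪" x ", " y "⟫" => @inner ℂ _ _ x y

/-- The Blaschke factor `b_a(S) = (S - a)(1 - ā S)⁻¹`. -/
noncomputable def blaschke (S : K →L[ℂ] K) (a : ℂ) : K →L[ℂ] K :=
  (S - a • 1) * Ring.inverse (1 - (starRingEnd ℂ a) • S)

variable {S : K →L[ℂ] K}

lemma conj_smul_norm_lt (hS : ∀ x, ‖S x‖ = ‖x‖) {a : ℂ} (ha : ‖a‖ < 1) :
    ‖(starRingEnd ℂ a) • S‖ < 1 := by
  have hSnorm : ‖S‖ ≤ 1 := S.opNorm_le_bound zero_le_one (fun x => by rw [hS, one_mul])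
  rw [norm_smul, RCLike.norm_conj]
  calc ‖a‖ * ‖S‖ ≤ ‖a‖ * 1 := mul_le_mul_of_nonneg_left hSnorm (norm_nonneg a)
    _ < 1 := by rw [mul_one]; exact ha

lemma blaschke_eq (hS : ∀ x, ‖S x‖ = ‖x‖) {a : ℂ} (ha : ‖a‖ < 1) :
    blaschke S a = (S - a • 1) * ↑(Units.oneSub _ (conj_smul_norm_lt hS ha))⁻¹ := by
  rw [blaschke]
  congr 1
  exact Ring.inverse_unit (Units.oneSub _ (conj_smul_norm_lt hS ha))

omit [CompleteSpace K] in
lemma sub_norm_eq (hS : ∀ x, ‖S x‖ = ‖x‖) (a : ℂ) (y : K) :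
    ‖(S - a • (1 : K →L[ℂ] K)) y‖ = ‖(1 - (starRingEnd ℂ a) • S) y‖ := by
  have h1 : (S - a • (1 : K →L[ℂ] K)) y = S y - a • y := by
    simp [sub_apply, smul_apply, one_apply]
  have h2 : ((1 : K →L[ℂ] K) - (starRingEnd ℂ a) • S) y = y - (starRingEnd ℂ a) • S y := by
    simp [sub_apply, smul_apply, one_apply]
  have e1 := norm_sub_sq (𝕜 := ℂ) (S y) (a • y)
  have e2 := norm_sub_sq (𝕜 := ℂ) y ((starRingEnd ℂ a) • S y)
  have hre : RCLike.re ⟪S y, a • y⟫ = RCLike.re ⟪y, (starRingEnd ℂ a) • S y⟫ := by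
    rw [inner_smul_right, inner_smul_right]
    have hconj : (starRingEnd ℂ) (a * ⟪S y, y⟫) = (starRingEnd ℂ a) * ⟪y, S y⟫ := by
      rw [map_mul, inner_conj_symm]
    rw [← hconj, RCLike.conj_re]
  have hsq : ‖S y - a • y‖ ^ 2 = ‖y - (starRingEnd ℂ a) • S y‖ ^ 2 := by
    rw [e1, e2, hre, hS, norm_smul, norm_smul, RCLike.norm_conj, hS]
  rw [h1, h2]
  have := congrArg Real.sqrt hsq
  rwa [Real.sqrt_sq (norm_nonneg _), Real.sqrt_sq (norm_nonneg _)] at this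

lemma blaschke_norm (hS : ∀ x, ‖S x‖ = ‖x‖) {a : ℂ} (ha : ‖a‖ < 1) (x : K) :
    ‖blaschke S a x‖ = ‖x‖ := by
  set u := Units.oneSub _ (conj_smul_norm_lt hS ha) with hu
  rw [blaschke_eq hS ha, mul_apply_eq_comp, sub_norm_eq hS]
  have h1 : ((1 : K →L[ℂ] K) - (starRingEnd ℂ a) • S) = (u : K →L[ℂ] K) := rfl
  rw [h1, ← mul_apply_eq_comp (F := K →L[ℂ] K), u.mul_inv, one_apply_eq_self]

lemma commute_sub_smul_one {C : K →L[ℂ] K} (hC : Commute C S) (a : ℂ) :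
    Commute C (S - a • 1) :=
  hC.sub_right ((Commute.one_right C).smul_right a)

lemma commute_one_sub_smul {C : K →L[ℂ] K} (hC : Commute C S) (a : ℂ) :
    Commute C (1 - (starRingEnd ℂ a) • S) :=
  (Commute.one_right C).sub_right (hC.smul_right _)

lemma blaschke_commute (hS : ∀ x, ‖S x‖ = ‖x‖) {a : ℂ} (ha : ‖a‖ < 1)
    {C : K →L[ℂ] K} (hC : Commute C S) : Commute C (blaschke S a) := by
  rw [blaschke_eq hS ha]
  refine (commute_sub_smul_one hC a).mul_right ?_
  exact Commute.units_inv_right (commute_one_sub_smul hC a)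

/-- product of the linear factors -/
noncomputable def Pl (S : K →L[ℂ] K) (l : List ℂ) : K →L[ℂ] K :=
  (l.map (fun a => S - a • 1)).prod

/-- product of the Blaschke factors -/
noncomputable def Jl (S : K →L[ℂ] K) (l : List ℂ) : K →L[ℂ] K :=
  (l.map (blaschke S)).prod

lemma Jl_norm (hS : ∀ x, ‖S x‖ = ‖x‖) {l : List ℂ} (hl : ∀ a ∈ l, ‖a‖ < 1) (x : K) :
    ‖Jl S l x‖ = ‖x‖ := by
  induction l generalizing x with
  | nil => simp [Jl]
  | cons a l ih =>
    rw [Jl, List.map_cons, List.prod_cons, mul_apply_eq_comp]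
    have h1 : ‖Jl S l x‖ = ‖x‖ := ih (fun b hb => hl b (List.mem_cons_of_mem a hb)) x
    rw [blaschke_norm hS (hl a (List.mem_cons_self)), ← Jl, h1]

lemma Pl_commute {C : K →L[ℂ] K} (hC : Commute C S) (l : List ℂ) : Commute C (Pl S l) := by
  refine Commute.list_prod_right _ _ fun x hx => ?_
  obtain ⟨a, _, rfl⟩ := List.mem_map.1 hx
  exact commute_sub_smul_one hC a

lemma Jl_commute (hS : ∀ x, ‖S x‖ = ‖x‖) {l : List ℂ} (hl : ∀ a ∈ l, ‖a‖ < 1)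
    {C : K →L[ℂ] K} (hC : Commute C S) : Commute C (Jl S l) := by
  refine Commute.list_prod_right _ _ fun x hx => ?_
  obtain ⟨a, ha, rfl⟩ := List.mem_map.1 hx
  exact blaschke_commute hS (hl a ha) hC

omit [CompleteSpace K] in
lemma range_mul (X Y : K →L[ℂ] K) :
    LinearMap.range ((X * Y : K →L[ℂ] K) : K →ₗ[ℂ] K) = (LinearMap.range (Y : K →ₗ[ℂ] K)).map (X : K →ₗ[ℂ] K) := by
  ext z
  simp only [LinearMap.mem_range, Submodule.mem_map, ContinuousLinearMap.coe_coe, mul_apply_eq_comp]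
  constructor
  · rintro ⟨w, rfl⟩; exact ⟨Y w, ⟨w, rfl⟩, rfl⟩
  · rintro ⟨y, ⟨w, rfl⟩, rfl⟩; exact ⟨w, rfl⟩

omit [CompleteSpace K] in
lemma range_unit (u : (K →L[ℂ] K)ˣ) : LinearMap.range ((u : K →L[ℂ] K) : K →ₗ[ℂ] K) = ⊤ := by
  rw [LinearMap.range_eq_top]
  intro z
  exact ⟨((u⁻¹ : (K →L[ℂ] K)ˣ) : K →L[ℂ] K) z, by rw [ContinuousLinearMap.coe_coe, ← mul_apply_eq_comp (F := K →L[ℂ] K), u.mul_inv, one_apply_eq_self]⟩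

omit [CompleteSpace K] in
lemma map_commute_unit {C P : K →L[ℂ] K} (hu : ∃ u : (K →L[ℂ] K)ˣ, (u : K →L[ℂ] K) = C)
    (hcomm : Commute C P) : (LinearMap.range (P : K →ₗ[ℂ] K)).map (C : K →ₗ[ℂ] K) = LinearMap.range (P : K →ₗ[ℂ] K) := by
  obtain ⟨u, rfl⟩ := hu
  rw [← range_mul, hcomm.eq, range_mul, range_unit, Submodule.map_top]

lemma Jl_range (hS : ∀ x, ‖S x‖ = ‖x‖) {l : List ℂ} (hl : ∀ a ∈ l, ‖a‖ < 1) :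
    LinearMap.range (Jl S l : K →ₗ[ℂ] K) = LinearMap.range (Pl S l : K →ₗ[ℂ] K) := by
  induction l with
  | nil => rfl
  | cons a l ih =>
    have ha := hl a (List.mem_cons_self)
    have hl' : ∀ b ∈ l, ‖b‖ < 1 := fun b hb => hl b (List.mem_cons_of_mem a hb)
    set u := Units.oneSub _ (conj_smul_norm_lt hS ha) with hu
    have h1 : Jl S (a :: l) = (S - a • 1) * (((u⁻¹ : (K →L[ℂ] K)ˣ) : K →L[ℂ] K) * Jl S l) := by
      rw [Jl, List.map_cons, List.prod_cons, ← Jl, blaschke_eq hS ha, mul_assoc]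
    have h2 : Pl S (a :: l) = (S - a • 1) * Pl S l := by
      rw [Pl, List.map_cons, List.prod_cons, ← Pl]
    rw [h1, h2, range_mul (S - a • 1) (((u⁻¹ : (K →L[ℂ] K)ˣ) : K →L[ℂ] K) * Jl S l),
      range_mul ((u⁻¹ : (K →L[ℂ] K)ˣ) : K →L[ℂ] K) (Jl S l),
      range_mul (S - a • 1) (Pl S l), ih hl']
    congr 1
    refine map_commute_unit ⟨u⁻¹, rfl⟩ ?_
    refine Commute.units_inv_left ?_
    exact Pl_commute ((commute_one_sub_smul (Commute.refl S) a).symm) l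

lemma Pl_quot_findim (hS : ∀ x, ‖S x‖ = ‖x‖)
    (hker : FiniteDimensional ℂ (LinearMap.ker (adjoint S : K →ₗ[ℂ] K)))
    {l : List ℂ} (hl : ∀ a ∈ l, ‖a‖ < 1) :
    FiniteDimensional ℂ (K ⧸ LinearMap.range (Pl S l : K →ₗ[ℂ] K)) := by
  induction l with
  | nil =>
    have h1 : LinearMap.range (Pl S [] : K →ₗ[ℂ] K) = ⊤ := by
      rw [Pl, List.map_nil, List.prod_nil, LinearMap.range_eq_top]
      exact fun z => ⟨z, rfl⟩
    rw [h1]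
    haveI : Subsingleton (K ⧸ (⊤ : Submodule ℂ K)) :=
      Submodule.Quotient.subsingleton_iff.2 rfl
    exact Module.Finite.of_surjective (0 : (⊥ : Submodule ℂ K) →ₗ[ℂ] (K ⧸ (⊤ : Submodule ℂ K)))
      (fun z => ⟨0, Subsingleton.elim _ _⟩)
  | cons a l ih =>
    have h2 : Pl S (a :: l) = (S - a • 1) * Pl S l := by
      rw [Pl, List.map_cons, List.prod_cons, ← Pl]
    rw [h2]
    exact St12Aux2.findim_quot_range_mul _ _
      (St12Aux2.findim_quot_range_sub hS hker (hl a (List.mem_cons_self)))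
      (ih (fun b hb => hl b (List.mem_cons_of_mem a hb)))

end St12Aux3


namespace St12Aux4

open St12Aux St12Aux2 St12Aux3

variable {K : Type*} [NormedAddCommGroup K] [InnerProductSpace ℂ K] [CompleteSpace K]

local notation "⟪" x ", " y "⟫" => @inner ℂ _ _ x y

variable {S : K →L[ℂ] K} {E : Submodule ℂ K}

omit [CompleteSpace K] in
lemma mk_S (hle : E ≤ E.comap (S : K →ₗ[ℂ] K)) (x : K) :
    (Submodule.Quotient.mk (S x) : K ⧸ E) =
      Submodule.mapQ E E (S : K →ₗ[ℂ] K) hle (Submodule.Quotient.mk x) := by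
  rw [Submodule.mapQ_apply]; rfl

omit [CompleteSpace K] in
lemma mk_Pl (hle : E ≤ E.comap (S : K →ₗ[ℂ] K)) (l : List ℂ) (x : K) :
    (Submodule.Quotient.mk (Pl S l x) : K ⧸ E) =
      ((l.map (fun a => Submodule.mapQ E E (S : K →ₗ[ℂ] K) hle - a • 1)).prod :
        Module.End ℂ (K ⧸ E)) (Submodule.Quotient.mk x) := by
  induction l generalizing x with
  | nil => simp [Pl]
  | cons a l ih =>
    have h2 : Pl S (a :: l) x = (S - a • 1) (Pl S l x) := by
      rw [Pl, List.map_cons, List.prod_cons, mul_apply_eq_comp]; rfl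
    rw [h2, List.map_cons, List.prod_cons, Module.End.mul_apply, ← ih]
    have h3 : (S - a • (1:K →L[ℂ] K)) (Pl S l x) = S (Pl S l x) - a • (Pl S l x) := by
      simp [sub_apply, smul_apply, one_apply]
    rw [h3]
    rw [Submodule.Quotient.mk_sub, Submodule.Quotient.mk_smul, mk_S hle]
    simp only [LinearMap.sub_apply, LinearMap.smul_apply, Module.End.one_apply]

/-- Every eigenvalue of the compression of a pure isometry to a finite-codimension
quotient has modulus strictly less than one. -/
lemma eig_lt_one (hS : ∀ x, ‖S x‖ = ‖x‖)
    (hpure : (⋂ n : ℕ, Set.range (⇑(S ^ (n + 1)))) = ({0} : Set K))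
    (hEc : IsClosed (E : Set K)) (hle : E ≤ E.comap (S : K →ₗ[ℂ] K))
    (hcodim : FiniteDimensional ℂ (K ⧸ E)) {a : ℂ}
    (heig : Module.End.HasEigenvalue (Submodule.mapQ E E (S : K →ₗ[ℂ] K) hle) a) : ‖a‖ < 1 := by
  haveI : IsClosed (E : Set K) := hEc
  set Sbar := Submodule.mapQ E E (S : K →ₗ[ℂ] K) hle with hSbar
  by_contra hcon
  push_neg at hcon
  obtain ⟨v, hv⟩ := heig.exists_hasEigenvector
  obtain ⟨x, hx⟩ := Submodule.Quotient.mk_surjective E v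
  have hpow : ∀ n : ℕ, (Sbar ^ n) v = a ^ n • v := by
    intro n
    induction n with
    | zero => simp
    | succ n ih =>
      rw [pow_succ', Module.End.mul_apply, ih, map_smul, hv.apply_eq_smul, smul_smul, ← pow_succ]
  have hmkpow : ∀ n : ℕ, (Submodule.Quotient.mk ((S ^ n) x) : K ⧸ E) = (Sbar ^ n) v := by
    intro n
    induction n with
    | zero => simpa using hx
    | succ n ih =>
      rw [pow_succ' (M := K →L[ℂ] K), mul_apply_eq_comp, mk_S hle, ih, pow_succ', Module.End.mul_apply]
  -- pick a coordinate where v is nonzero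
  set b := Module.finBasis ℂ (K ⧸ E) with hb
  have hvne : ∃ i, b.repr v i ≠ 0 := by
    by_contra hall
    push_neg at hall
    have h0 : b.repr v = 0 := Finsupp.ext hall
    exact hv.2 (b.repr.map_eq_zero_iff.1 h0)
  obtain ⟨i, hci⟩ := hvne
  set c : ℂ := b.repr v i with hc
  -- the coordinate functional, as a continuous functional on K
  set πclm : K →L[ℂ] (K ⧸ E) :=
    LinearMap.mkContinuous E.mkQ 1
      (fun y => by rw [one_mul]; exact Submodule.Quotient.norm_mk_le E y) with hπ
  set φ : K →L[ℂ] ℂ :=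
    (LinearMap.toContinuousLinearMap (b.coord i)).comp πclm with hφ
  set f := (InnerProductSpace.toDual ℂ K).symm φ with hfdef
  have hfy : ∀ y : K, ⟪f, y⟫ = φ y := fun y => InnerProductSpace.toDual_symm_apply
  have hφn : ∀ n : ℕ, φ ((S ^ n) x) = a ^ n * c := by
    intro n
    have h1 : πclm ((S ^ n) x) = (Sbar ^ n) v := by
      rw [hπ]
      rw [LinearMap.mkContinuous_apply]
      rw [Submodule.mkQ_apply]
      exact hmkpow n
    rw [hφ, ContinuousLinearMap.comp_apply, h1, LinearMap.coe_toContinuousLinearMap']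
    rw [hpow n, map_smul, smul_eq_mul]
    rfl
  have hbound : ∀ n : ℕ, ‖a ^ n * c‖ ≤ ‖((adjoint S) ^ n) f‖ * ‖x‖ := by
    intro n
    rw [← hφn n, ← hfy]
    have h2 : ⟪f, (S ^ n) x⟫ = ⟪adjoint (S ^ n) f, x⟫ := (adjoint_inner_left _ _ _).symm
    rw [h2, ← adjoint_pow_apply]
    exact norm_inner_le_norm _ _
  have hcpos : (0:ℝ) < ‖c‖ := norm_pos_iff.2 hci
  have htend : Tendsto (fun n => ‖((adjoint S) ^ n) f‖ * ‖x‖) atTop (nhds 0) := by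
    have := (adjoint_pow_tendsto_zero hS hpure f).mul_const ‖x‖
    rwa [zero_mul] at this
  have hev : ∀ᶠ n in atTop, ‖((adjoint S) ^ n) f‖ * ‖x‖ < ‖c‖ :=
    htend.eventually (gt_mem_nhds hcpos)
  obtain ⟨n, hn⟩ := hev.exists
  have hfinal : ‖c‖ ≤ ‖a ^ n * c‖ := by
    rw [norm_mul, _root_.norm_pow]
    nlinarith [one_le_pow₀ (n := n) hcon, norm_nonneg c, pow_nonneg (norm_nonneg a) n]
  linarith [hbound n, hfinal]

end St12Aux4


namespace St12Aux4

variable {K : Type*} [NormedAddCommGroup K] [InnerProductSpace ℂ K] [CompleteSpace K]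
variable {S : K →L[ℂ] K} {E : Submodule ℂ K}

open St12Aux St12Aux2 St12Aux3

lemma roots_lt_one (hS : ∀ x, ‖S x‖ = ‖x‖)
    (hpure : (⋂ n : ℕ, Set.range (⇑(S ^ (n + 1)))) = ({0} : Set K))
    (hEc : IsClosed (E : Set K)) (hle : E ≤ E.comap (S : K →ₗ[ℂ] K))
    (hcodim : FiniteDimensional ℂ (K ⧸ E)) :
    ∀ a ∈ (minpoly ℂ (Submodule.mapQ E E (S : K →ₗ[ℂ] K) hle)).roots.toList, ‖a‖ < 1 := by
  intro a ha
  rw [Multiset.mem_toList] at ha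
  have hroot := Polynomial.isRoot_of_mem_roots ha
  have heig := Module.End.hasEigenvalue_of_isRoot hroot
  exact eig_lt_one hS hpure hEc hle hcodim heig

omit [CompleteSpace K] in
lemma Pl_roots_mem (hle : E ≤ E.comap (S : K →ₗ[ℂ] K))
    (hcodim : FiniteDimensional ℂ (K ⧸ E)) (x : K) :
    Pl S ((minpoly ℂ (Submodule.mapQ E E (S : K →ₗ[ℂ] K) hle)).roots.toList) x ∈ E := by
  set Sbar := Submodule.mapQ E E (S : K →ₗ[ℂ] K) hle with hSbar
  set l := (minpoly ℂ Sbar).roots.toList with hldef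
  have hint : IsIntegral ℂ Sbar := Algebra.IsIntegral.isIntegral Sbar
  have hmon := minpoly.monic hint
  have hsplit : Polynomial.Splits (minpoly ℂ Sbar) :=
    IsAlgClosed.splits _
  have hfact := hsplit.eq_prod_roots_of_monic hmon
  have hzero : ((l.map (fun a => Sbar - a • 1)).prod : Module.End ℂ (K ⧸ E)) = 0 := by
    have step1 : (l.map (fun a => Sbar - a • 1)) =
        (l.map (fun b => Polynomial.aeval Sbar (Polynomial.X - Polynomial.C b))) := by
      refine List.map_congr_left fun b _ => ?_
      rw [map_sub, Polynomial.aeval_X, Polynomial.aeval_C,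
        Module.algebraMap_end_eq_smul_id]
      rfl
    rw [step1]
    have step3 : (l.map (fun b => Polynomial.aeval Sbar (Polynomial.X - Polynomial.C b))).prod
        = Polynomial.aeval Sbar ((l.map (fun b => Polynomial.X - Polynomial.C b)).prod) := by
      rw [map_list_prod (Polynomial.aeval Sbar), List.map_map]
      rfl
    rw [step3]
    have step2 : ((l.map (fun b => Polynomial.X - Polynomial.C b)).prod : Polynomial ℂ) =
        minpoly ℂ Sbar := by
      conv_rhs => rw [hfact]
      rw [hldef, ← Multiset.coe_toList (minpoly ℂ Sbar).roots, Multiset.map_coe,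
        Multiset.prod_coe, Multiset.coe_toList]
    rw [step2, minpoly.aeval]
  rw [← Submodule.Quotient.mk_eq_zero E, mk_Pl hle, hzero, LinearMap.zero_apply]

end St12Aux4

/-- if `W = V|_H` for a closed invariant finite codimension subspace `H`,
then `V` is unitarily equivalent to `W` restricted to a closed invariant finite
codimension subspace of `H`. -/
theorem statement12 {K : Type*} [NormedAddCommGroup K] [InnerProductSpace ℂ K]
    [CompleteSpace K] (p : CPoly2) (hsf : SqFree p) (hit : InnerToral p)
    (S T : K →L[ℂ] K) (hV : IsPureIsopair p S T) (hfin : FiniteBimult S T)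
    (E : Submodule ℂ K) (hEc : IsClosed (E : Set K))
    (hSE : ∀ x ∈ E, S x ∈ E) (hTE : ∀ x ∈ E, T x ∈ E)
    (hcodim : FiniteDimensional ℂ (K ⧸ E)) :
    ∃ (L : Submodule ℂ ↥E) (_ : IsClosed (L : Set ↥E))
      (hSL : ∀ x ∈ L, clmRestrict S E hSE x ∈ L)
      (hTL : ∀ x ∈ L, clmRestrict T E hTE x ∈ L),
      FiniteDimensional ℂ (↥E ⧸ L) ∧
      UnitarilyEquivPairs S T
        (clmRestrict (clmRestrict S E hSE) L hSL)
        (clmRestrict (clmRestrict T E hTE) L hTL) := by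
    classical
  obtain ⟨hST, hSpure, hTpure, hppoly⟩ := hV
  have hS : ∀ x, ‖S x‖ = ‖x‖ := hSpure.1
  have hpure := hSpure.2
  have hkerfin : FiniteDimensional ℂ
      (LinearMap.ker (ContinuousLinearMap.adjoint S : K →ₗ[ℂ] K)) := by
    have h1 := hfin.1
    rw [multiplicity'] at h1
    exact Module.rank_lt_aleph0_iff.1 h1
  have hle : E ≤ E.comap (S : K →ₗ[ℂ] K) := fun x hx => hSE x hx
  set l := (minpoly ℂ (Submodule.mapQ E E (S : K →ₗ[ℂ] K) hle)).roots.toList with hl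
  have hroots : ∀ a ∈ l, ‖a‖ < 1 := St12Aux4.roots_lt_one hS hpure hEc hle hcodim
  set J := St12Aux3.Jl S l with hJ
  have hJnorm : ∀ x, ‖J x‖ = ‖x‖ := St12Aux3.Jl_norm hS hroots
  have hJS : Commute S J := St12Aux3.Jl_commute hS hroots (Commute.refl S)
  have hJT : Commute T J := St12Aux3.Jl_commute hS hroots hST.symm
  have hrange : LinearMap.range (J : K →ₗ[ℂ] K) = LinearMap.range (St12Aux3.Pl S l : K →ₗ[ℂ] K) :=
    St12Aux3.Jl_range hS hroots
  have hJE : ∀ x, J x ∈ E := by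
    intro x
    have h2 : J x ∈ LinearMap.range (St12Aux3.Pl S l : K →ₗ[ℂ] K) :=
      hrange ▸ LinearMap.mem_range_self (J : K →ₗ[ℂ] K) x
    obtain ⟨y, hy⟩ := h2
    rw [← hy]
    exact St12Aux4.Pl_roots_mem hle hcodim y
  have hquotfin : FiniteDimensional ℂ (K ⧸ LinearMap.range (St12Aux3.Pl S l : K →ₗ[ℂ] K)) :=
    St12Aux3.Pl_quot_findim hS hkerfin hroots
  -- the isometric embedding into E
  set toE : K →ₗ[ℂ] E := LinearMap.codRestrict E (J : K →ₗ[ℂ] K) hJE with htoE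
  have htoEnorm : ∀ x, ‖toE x‖ = ‖x‖ := by
    intro x
    have h3 : ((toE x : E) : K) = J x := rfl
    calc ‖toE x‖ = ‖((toE x : E) : K)‖ := rfl
      _ = ‖x‖ := by rw [h3, hJnorm]
  have hisom : Isometry ⇑toE := AddMonoidHomClass.isometry_of_norm toE htoEnorm
  have hinj : Function.Injective ⇑toE := hisom.injective
  set L : Submodule ℂ E := LinearMap.range toE with hLdef
  have hLc : IsClosed (L : Set E) := by
    rw [hLdef, LinearMap.coe_range]
    exact hisom.isClosedEmbedding.isClosed_range
  -- invariance
  have hcomm_val : ∀ (C : K →L[ℂ] K), Commute C J → ∀ y, J (C y) = C (J y) := by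
    intro C hC y
    calc J (C y) = (J * C) y := rfl
      _ = (C * J) y := by rw [hC.eq]
      _ = C (J y) := rfl
  have hSL : ∀ z ∈ L, clmRestrict S E hSE z ∈ L := by
    rintro z ⟨y, rfl⟩
    refine ⟨S y, Subtype.ext ?_⟩
    show J (S y) = ((clmRestrict S E hSE (toE y) : E) : K)
    have h4 : ((clmRestrict S E hSE (toE y) : E) : K) = S ((toE y : E) : K) := rfl
    rw [h4]
    exact hcomm_val S hJS y
  have hTL : ∀ z ∈ L, clmRestrict T E hTE z ∈ L := by
    rintro z ⟨y, rfl⟩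
    refine ⟨T y, Subtype.ext ?_⟩
    show J (T y) = ((clmRestrict T E hTE (toE y) : E) : K)
    have h4 : ((clmRestrict T E hTE (toE y) : E) : K) = T ((toE y : E) : K) := rfl
    rw [h4]
    exact hcomm_val T hJT y
  refine ⟨L, hLc, hSL, hTL, ?_, ?_⟩
  · -- finite codimension
    haveI hNK : FiniteDimensional ℂ (K ⧸ LinearMap.range (J : K →ₗ[ℂ] K)) := hrange ▸ hquotfin
    set f0 : E →ₗ[ℂ] (K ⧸ LinearMap.range (J : K →ₗ[ℂ] K)) :=
      (LinearMap.range (J : K →ₗ[ℂ] K)).mkQ ∘ₗ E.subtype with hf0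
    have hker0 : L ≤ LinearMap.ker f0 := by
      rintro _ ⟨y, rfl⟩
      rw [LinearMap.mem_ker, hf0, LinearMap.comp_apply, Submodule.mkQ_apply,
        Submodule.Quotient.mk_eq_zero]
      exact ⟨y, rfl⟩
    have hkerle : LinearMap.ker f0 ≤ L := by
      intro z hz
      rw [LinearMap.mem_ker, hf0, LinearMap.comp_apply, Submodule.mkQ_apply,
        Submodule.Quotient.mk_eq_zero] at hz
      obtain ⟨y, hy⟩ := hz
      exact ⟨y, Subtype.ext hy⟩
    have hinj2 : Function.Injective ⇑(L.liftQ f0 hker0) :=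
      LinearMap.ker_eq_bot.1 (Submodule.ker_liftQ_eq_bot L f0 hker0 hkerle)
    exact FiniteDimensional.of_injective (L.liftQ f0 hker0) hinj2
  · -- unitary equivalence
    set eL := LinearEquiv.ofInjective toE hinj with heL
    have hnorm : ∀ x, ‖(eL x : E)‖ = ‖x‖ := by
      intro x
      rw [LinearEquiv.ofInjective_apply, htoEnorm]
    refine ⟨⟨eL, fun x => hnorm x⟩, fun x => ?_, fun x => ?_⟩
    · apply Subtype.ext
      apply Subtype.ext
      show ((toE (S x) : E) : K) =
        ((clmRestrict S E hSE ((eL x : L) : E) : E) : K)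
      have h5 : ((clmRestrict S E hSE ((eL x : L) : E) : E) : K) =
          S (((eL x : L) : E) : K) := rfl
      have h6 : (((eL x : L) : E) : K) = J x := rfl
      rw [h5, h6]
      exact hcomm_val S hJS x
    · apply Subtype.ext
      apply Subtype.ext
      show ((toE (T x) : E) : K) =
        ((clmRestrict T E hTE ((eL x : L) : E) : E) : K)
      have h5 : ((clmRestrict T E hTE ((eL x : L) : E) : E) : K) =
          T (((eL x : L) : E) : K) := rfl
      have h6 : (((eL x : L) : E) : K) = J x := rfl
      rw [h5, h6]
      exact hcomm_val T hJT x
end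
end

section
/- Let p ∈ ℂ[z,w] be square free and inner toral. Suppose V = (S,T) is a pure p-isopair of finite bimultiplicity acting on a Hilbert space K. If there exists a closed V-invariant subspace H of K of finite codimension such that the restriction of V to H is β-cyclic, then there exist a β-cyclic pure p-isopair W acting on a Hilbert space L and a closed W-invariant subspace F of L of finite codimension such that the restriction of W to F is unitarily equivalent to V. -/
noncomputable section

universe u

open MvPolynomial

section AuxStatement13
set_option linter.unusedSectionVars false
set_option maxHeartbeats 1000000
open ContinuousLinearMap
local notation "⟪" x ", " y "⟫" => @inner ℂ _ _ x y
variable {K : Type*} [NormedAddCommGroup K] [InnerProductSpace ℂ K] [CompleteSpace K]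




lemma isom_norm_le (S : K →L[ℂ] K) (h : ∀ x, ‖S x‖ = ‖x‖) : ‖S‖ ≤ 1 :=
  S.opNorm_le_bound zero_le_one (fun x => by rw [h, one_mul])

lemma isom_adj_comp (S : K →L[ℂ] K) (h : ∀ x, ‖S x‖ = ‖x‖) :
    (adjoint S) * S = 1 :=
  (S.norm_map_iff_adjoint_comp_self).mp h

/-- `S* (1 - c S) = S* - c` for an isometry `S`. -/
lemma adj_one_sub (S : K →L[ℂ] K) (h : ∀ x, ‖S x‖ = ‖x‖) (c : ℂ) :
    (adjoint S) * (1 - c • S) = adjoint S - c • 1 := by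
  rw [mul_sub, mul_one, mul_smul_comm, isom_adj_comp S h]

/-- single factor norm identity: `‖(S - c̄)x‖ = ‖(1 - c S)x‖`. -/
lemma factor_norm_eq (S : K →L[ℂ] K) (h : ∀ x, ‖S x‖ = ‖x‖) (c : ℂ) (x : K) :
    ‖(S - (starRingEnd ℂ c) • 1) x‖ = ‖(1 - c • S) x‖ := by
  have h2 : ∀ u v : K, ‖u - v‖ ^ 2 = ‖u‖ ^ 2 - 2 * (Complex.re ⟪u, v⟫) + ‖v‖ ^ 2 := by
    intro u v
    have := @norm_sub_sq ℂ _ _ _ _ u v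
    simpa using this
  have e1 : (S - (starRingEnd ℂ c) • 1) x = S x - (starRingEnd ℂ c) • x := by
    simp [sub_apply, smul_apply]
  have e2 : (1 - c • S) x = x - c • S x := by
    simp [sub_apply, smul_apply]
  have key : ‖S x - (starRingEnd ℂ c) • x‖ ^ 2 = ‖x - c • S x‖ ^ 2 := by
    rw [h2, h2]
    have i1 : ⟪S x, (starRingEnd ℂ c) • x⟫ = (starRingEnd ℂ c) * ⟪S x, x⟫ := by
      rw [inner_smul_right]
    have i2 : ⟪x, c • S x⟫ = c * ⟪x, S x⟫ := by rw [inner_smul_right]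
    have i3 : ⟪S x, x⟫ = starRingEnd ℂ ⟪x, S x⟫ := (inner_conj_symm _ _).symm
    have r1 : Complex.re ⟪S x, (starRingEnd ℂ c) • x⟫ = Complex.re ⟪x, c • S x⟫ := by
      rw [i1, i2, i3, ← map_mul]
      exact Complex.conj_re _
    have n1 : ‖(starRingEnd ℂ c) • x‖ = ‖c‖ * ‖x‖ := by
      rw [norm_smul]; simp
    have n2 : ‖c • S x‖ = ‖c‖ * ‖x‖ := by rw [norm_smul, h]
    rw [r1, n1, n2, h]
  rw [e1, e2]
  have := congrArg Real.sqrt key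
  rwa [Real.sqrt_sq (norm_nonneg _), Real.sqrt_sq (norm_nonneg _)] at this

lemma one_sub_isUnit (S : K →L[ℂ] K) (h : ∀ x, ‖S x‖ = ‖x‖) {c : ℂ}
    (hc : ‖c‖ < 1) : IsUnit ((1 : K →L[ℂ] K) - c • S) := by
  apply isUnit_one_sub_of_norm_lt_one
  calc ‖c • S‖ ≤ ‖c‖ * ‖S‖ := norm_smul_le c S
  _ ≤ ‖c‖ * 1 := by
        exact mul_le_mul_of_nonneg_left (isom_norm_le S h) (norm_nonneg c)
  _ < 1 := by rwa [mul_one]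

lemma isom_norm_le' (S : K →L[ℂ] K) (h : ∀ x, ‖S x‖ = ‖x‖) : ‖S‖ ≤ 1 :=
  S.opNorm_le_bound zero_le_one (fun x => by rw [h, one_mul])

lemma conj_mul_self_of_norm_one {c : ℂ} (heq : ‖c‖ = 1) : (starRingEnd ℂ c) * c = 1 := by
  rw [mul_comm, Complex.mul_conj]
  have : Complex.normSq c = 1 := by
    have := Complex.sq_norm c
    rw [heq] at this
    simpa using this.symm
  rw [this]; norm_cast

/-- eigenvalues of the adjoint of a pure isometry lie strictly inside the disk. -/
lemma eig_adj_lt_one (S : K →L[ℂ] K) (h : ∀ x, ‖S x‖ = ‖x‖)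
    (hp : (⋂ n : ℕ, Set.range (⇑(S ^ (n + 1)))) = ({0} : Set K))
    {c : ℂ} {v : K} (hv : v ≠ 0) (he : adjoint S v = c • v) : ‖c‖ < 1 := by
  have hnv : ‖v‖ ≠ 0 := norm_ne_zero_iff.mpr hv
  have hle : ‖c‖ ≤ 1 := by
    have h1 : ‖adjoint S v‖ ≤ ‖adjoint S‖ * ‖v‖ := le_opNorm _ _
    have h2 : ‖adjoint S‖ = ‖S‖ :=
      LinearIsometryEquiv.norm_map ContinuousLinearMap.adjoint S
    have h3 : ‖adjoint S v‖ = ‖c‖ * ‖v‖ := by rw [he, norm_smul]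
    have h4 : ‖c‖ * ‖v‖ ≤ 1 * ‖v‖ := by
      calc ‖c‖ * ‖v‖ = ‖adjoint S v‖ := h3.symm
      _ ≤ ‖adjoint S‖ * ‖v‖ := h1
      _ ≤ 1 * ‖v‖ := by
          apply mul_le_mul_of_nonneg_right _ (norm_nonneg v)
          rw [h2]; exact isom_norm_le' S h
    exact le_of_mul_le_mul_right (by simpa using h4)
      (lt_of_le_of_ne (norm_nonneg v) (Ne.symm hnv))
  rcases lt_or_eq_of_le hle with hlt | heq
  · exact hlt
  · exfalso
    have heq : ‖c‖ = 1 := heq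
    have hinner : ⟪v, S v⟫ = (starRingEnd ℂ c) * (↑(‖v‖ ^ 2) : ℂ) := by
      have h5 : ⟪adjoint S v, v⟫ = ⟪v, S v⟫ := adjoint_inner_left S v v
      rw [← h5, he, inner_smul_left, inner_self_eq_norm_sq_to_K]
      norm_cast
    have hSv : S v = (starRingEnd ℂ c) • v := by
      have hexp : ‖S v - (starRingEnd ℂ c) • v‖ ^ 2 = 0 := by
        have hns := @norm_sub_sq ℂ _ _ _ _ (S v) ((starRingEnd ℂ c) • v)
        rw [hns]
        have i1 : ⟪S v, (starRingEnd ℂ c) • v⟫ = (starRingEnd ℂ c) * ⟪S v, v⟫ :=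
          inner_smul_right _ _ _
        have i2 : ⟪S v, v⟫ = starRingEnd ℂ ⟪v, S v⟫ := (inner_conj_symm _ _).symm
        have hcc : ⟪S v, (starRingEnd ℂ c) • v⟫ = (↑(‖v‖ ^ 2) : ℂ) := by
          rw [i1, i2, hinner, map_mul, Complex.conj_conj, ← mul_assoc,
            conj_mul_self_of_norm_one heq, one_mul, Complex.conj_ofReal]
        rw [hcc]
        have hn1 : ‖(starRingEnd ℂ c) • v‖ = ‖v‖ := by
          rw [norm_smul, RCLike.norm_conj, heq, one_mul]
        rw [hn1, h]
        simp only [Complex.ofReal_pow]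
        rw [show RCLike.re ((↑(‖v‖) : ℂ) ^ 2) = ‖v‖ ^ 2 by norm_cast]
        ring
      have := pow_eq_zero_iff (n := 2) (by norm_num) |>.mp hexp
      rwa [norm_eq_zero, sub_eq_zero] at this
    have hr : ∀ n : ℕ, v ∈ Set.range (⇑(S ^ (n + 1))) := by
      intro n
      have hpow : ∀ m : ℕ, (S ^ m) v = ((starRingEnd ℂ c) ^ m) • v := by
        intro m
        induction m with
        | zero => simp
        | succ k ih =>
          rw [pow_succ, mul_apply_eq_comp, hSv, map_smul, ih, smul_smul, pow_succ, mul_comm]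
      refine ⟨(c ^ (n + 1)) • v, ?_⟩
      rw [map_smul, hpow, smul_smul]
      rw [mul_comm, ← mul_pow, conj_mul_self_of_norm_one heq, one_pow, one_smul]
    have hmem : v ∈ (⋂ n : ℕ, Set.range (⇑(S ^ (n + 1)))) := Set.mem_iInter.mpr hr
    rw [hp] at hmem
    exact hv hmem

/-- finite codimension iff a finite set spans a complement. -/
lemma finCodim_iff (F : Submodule ℂ K) :
    FiniteDimensional ℂ (K ⧸ F) ↔
      ∃ s : Set K, s.Finite ∧ F ⊔ Submodule.span ℂ s = ⊤ := by
  constructor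
  · intro hfd
    have hfg : (⊤ : Submodule ℂ (K ⧸ F)).FG := Module.finite_def.mp hfd
    obtain ⟨t, ht⟩ := hfg
    have hsur := F.mkQ_surjective
    choose g hg using hsur
    refine ⟨g '' (t : Set (K ⧸ F)), (t.finite_toSet.image g), ?_⟩
    rw [eq_top_iff]
    rintro x -
    have hx : F.mkQ x ∈ Submodule.span ℂ (t : Set (K ⧸ F)) := by rw [ht]; trivial
    have htsub : (t : Set (K ⧸ F)) ⊆ F.mkQ '' (g '' (t : Set (K ⧸ F))) := by
      intro y hy
      exact ⟨g y, ⟨y, hy, rfl⟩, hg y⟩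
    have hx2 : F.mkQ x ∈ Submodule.span ℂ (F.mkQ '' (g '' (t : Set (K ⧸ F)))) :=
      Submodule.span_mono htsub hx
    rw [← Submodule.map_span] at hx2
    obtain ⟨y, hy, hyx⟩ := hx2
    have hxy : x - y ∈ F := by
      rw [← Submodule.ker_mkQ F, LinearMap.mem_ker, map_sub, hyx, sub_self]
    have hdec : x = (x - y) + y := (sub_add_cancel x y).symm
    rw [hdec]
    exact Submodule.add_mem_sup hxy hy
  · rintro ⟨s, hsf, hs⟩
    rw [show FiniteDimensional ℂ (K ⧸ F) = Module.Finite ℂ (K ⧸ F) from rfl,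
      Module.finite_def]
    refine ⟨(hsf.image F.mkQ).toFinset, ?_⟩
    rw [Set.Finite.coe_toFinset, ← Submodule.map_span]
    rw [eq_top_iff]
    rintro x -
    obtain ⟨y, rfl⟩ := F.mkQ_surjective x
    have hy : y ∈ F ⊔ Submodule.span ℂ s := by rw [hs]; trivial
    obtain ⟨a, ha, b, hb, rfl⟩ := Submodule.mem_sup.mp hy
    have hab : F.mkQ (a + b) = F.mkQ b := by
      have ha0 : F.mkQ a = 0 := by
        rw [← LinearMap.mem_ker, Submodule.ker_mkQ]; exact ha
      simp [map_add, ha0]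
    rw [hab]
    exact Submodule.mem_map_of_mem hb

/-- composing two finite-codimension-range operators. -/
lemma comp_finCodim (B C : K →L[ℂ] K)
    (hB : FiniteDimensional ℂ (K ⧸ LinearMap.range (B : K →ₗ[ℂ] K)))
    (hC : FiniteDimensional ℂ (K ⧸ LinearMap.range (C : K →ₗ[ℂ] K))) :
    FiniteDimensional ℂ (K ⧸ LinearMap.range ((B * C : K →L[ℂ] K) : K →ₗ[ℂ] K)) := by
  rw [finCodim_iff] at hB hC ⊢
  obtain ⟨s, hsf, hs⟩ := hB
  obtain ⟨t, htf, ht⟩ := hC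
  refine ⟨s ∪ (⇑B '' t), hsf.union (htf.image _), ?_⟩
  rw [eq_top_iff]
  rintro x -
  have hx : x ∈ LinearMap.range (B : K →ₗ[ℂ] K) ⊔ Submodule.span ℂ s := by rw [hs]; trivial
  obtain ⟨b, ⟨y, rfl⟩, u, hu, rfl⟩ := Submodule.mem_sup.mp hx
  have hy : y ∈ LinearMap.range (C : K →ₗ[ℂ] K) ⊔ Submodule.span ℂ t := by rw [ht]; trivial
  obtain ⟨cz, ⟨z, rfl⟩, v, hv, rfl⟩ := Submodule.mem_sup.mp hy
  have h1 : B (C z + v) + u = (B * C) z + (B v + u) := by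
    rw [map_add, mul_apply_eq_comp]; abel
  simp only [ContinuousLinearMap.coe_coe]
  rw [h1]
  apply Submodule.add_mem_sup (LinearMap.mem_range_self _ z)
  have hBv : B v ∈ Submodule.span ℂ (s ∪ (⇑B '' t)) := by
    have hmap : B v ∈ Submodule.map (B : K →ₗ[ℂ] K) (Submodule.span ℂ t) :=
      Submodule.mem_map_of_mem hv
    rw [Submodule.map_span] at hmap
    exact Submodule.span_mono (fun w hw => Or.inr hw) hmap
  have hu' : u ∈ Submodule.span ℂ (s ∪ (⇑B '' t)) :=
    Submodule.span_mono (fun w hw => Or.inl hw) hu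
  exact Submodule.add_mem _ hBv hu'

lemma orthogonal_range_eq_ker_adjoint (B : K →L[ℂ] K) :
    (LinearMap.range (B : K →ₗ[ℂ] K))ᗮ = LinearMap.ker ((adjoint B : K →L[ℂ] K) : K →ₗ[ℂ] K) := by
  ext x
  rw [Submodule.mem_orthogonal, LinearMap.mem_ker]
  constructor
  · intro hx
    have h1 : ∀ y : K, ⟪adjoint B x, y⟫ = 0 := by
      intro y
      rw [adjoint_inner_left]
      have := hx (B y) (LinearMap.mem_range_self _ y)
      rw [← inner_conj_symm, this, map_zero]
    have := h1 (adjoint B x)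
    rwa [inner_self_eq_zero] at this
  · intro hx u hu
    obtain ⟨y, rfl⟩ := hu
    simp only [ContinuousLinearMap.coe_coe] at hx ⊢
    rw [← inner_conj_symm, ← adjoint_inner_left, hx, inner_zero_left, map_zero]

lemma quot_range_findim (B : K →L[ℂ] K) {ε : ℝ} (hε : 0 < ε)
    (hlb : ∀ x, ε * ‖x‖ ≤ ‖B x‖)
    (hker : FiniteDimensional ℂ ↥(LinearMap.ker ((adjoint B : K →L[ℂ] K) : K →ₗ[ℂ] K))) :
    FiniteDimensional ℂ (K ⧸ LinearMap.range (B : K →ₗ[ℂ] K)) := by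
  have hal : AntilipschitzWith (ε⁻¹).toNNReal B := by
    apply B.antilipschitz_of_bound
    intro x
    rw [Real.coe_toNNReal _ (le_of_lt (inv_pos.mpr hε))]
    have h2 : ε⁻¹ * (ε * ‖x‖) ≤ ε⁻¹ * ‖B x‖ :=
      mul_le_mul_of_nonneg_left (hlb x) (le_of_lt (inv_pos.mpr hε))
    rwa [← mul_assoc, inv_mul_cancel₀ (ne_of_gt hε), one_mul] at h2
  have hcl : IsClosed (Set.range ⇑B) := hal.isClosed_range B.uniformContinuous
  have hcl' : IsClosed ((LinearMap.range (B : K →ₗ[ℂ] K) : Submodule ℂ K) : Set K) := by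
    rw [LinearMap.coe_range]; exact hcl
  haveI : CompleteSpace ↥(LinearMap.range (B : K →ₗ[ℂ] K)) := hcl'.completeSpace_coe
  have hcompl : IsCompl (LinearMap.range (B : K →ₗ[ℂ] K)) (LinearMap.range (B : K →ₗ[ℂ] K))ᗮ :=
    Submodule.isCompl_orthogonal_of_hasOrthogonalProjection
  have e := Submodule.quotientEquivOfIsCompl _ _ hcompl
  rw [orthogonal_range_eq_ker_adjoint] at e
  exact Module.Finite.equiv e.symm


lemma adjoint_factor (S : K →L[ℂ] K) (c : ℂ) :
    adjoint (S - (starRingEnd ℂ c) • 1) = adjoint S - c • 1 := by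
  rw [← star_eq_adjoint, ← star_eq_adjoint, star_sub, star_smul, star_one]
  simp [Complex.star_def]

lemma ker_adj_sub_findim (S : K →L[ℂ] K) (h : ∀ x, ‖S x‖ = ‖x‖) {c : ℂ}
    (hc : ‖c‖ < 1)
    (hker : FiniteDimensional ℂ ↥(LinearMap.ker ((adjoint S : K →L[ℂ] K) : K →ₗ[ℂ] K))) :
    FiniteDimensional ℂ ↥(LinearMap.ker ((adjoint S - c • 1 : K →L[ℂ] K) : K →ₗ[ℂ] K)) := by
  set B : K →L[ℂ] K := 1 - c • S with hB
  have hwd : ∀ x : K, x ∈ LinearMap.ker ((adjoint S - c • 1 : K →L[ℂ] K) : K →ₗ[ℂ] K) →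
      B x ∈ LinearMap.ker ((adjoint S : K →L[ℂ] K) : K →ₗ[ℂ] K) := by
    intro x hx
    rw [LinearMap.mem_ker] at hx ⊢
    have := congrArg (fun f : K →L[ℂ] K => f x) (adj_one_sub S h c)
    simp only [mul_apply_eq_comp] at this
    simp only [ContinuousLinearMap.coe_coe] at hx ⊢
    rw [this, hx]
  let e : ↥(LinearMap.ker ((adjoint S - c • 1 : K →L[ℂ] K) : K →ₗ[ℂ] K)) →ₗ[ℂ] ↥(LinearMap.ker ((adjoint S : K →L[ℂ] K) : K →ₗ[ℂ] K)) :=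
    { toFun := fun x => ⟨B x, hwd x x.2⟩
      map_add' := fun x y => by ext; exact map_add B (x : K) y
      map_smul' := fun a x => by ext; exact map_smul B a (x : K) }
  have hBinj : Function.Injective ⇑B := by
    obtain ⟨u, hu⟩ := one_sub_isUnit S h hc
    intro x y hxy
    have h2 : (↑u⁻¹ * ↑u : K →L[ℂ] K) x = (↑u⁻¹ * ↑u : K →L[ℂ] K) y := by
      simp only [mul_apply_eq_comp, hu, hB]
      rw [hxy]
    rwa [u.inv_mul, ContinuousLinearMap.one_apply, ContinuousLinearMap.one_apply] at h2
  have hinj : Function.Injective ⇑e := by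
    intro x y hxy
    apply Subtype.ext
    apply hBinj
    exact congrArg Subtype.val hxy
  exact FiniteDimensional.of_injective e hinj

/-- the quotient by the range of `S - c̄` is finite dimensional. -/
lemma factor_quot_findim (S : K →L[ℂ] K) (h : ∀ x, ‖S x‖ = ‖x‖) {c : ℂ}
    (hc : ‖c‖ < 1)
    (hker : FiniteDimensional ℂ ↥(LinearMap.ker ((adjoint S : K →L[ℂ] K) : K →ₗ[ℂ] K))) :
    FiniteDimensional ℂ (K ⧸ LinearMap.range ((S - (starRingEnd ℂ c) • 1 : K →L[ℂ] K) : K →ₗ[ℂ] K)) := by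
  refine quot_range_findim _ (ε := 1 - ‖c‖) (by linarith) ?_ ?_
  · intro x
    have h1 : (S - (starRingEnd ℂ c) • 1) x = S x - (starRingEnd ℂ c) • x := by
      simp [sub_apply, smul_apply]
    rw [h1]
    have h2 : ‖S x‖ - ‖(starRingEnd ℂ c) • x‖ ≤ ‖S x - (starRingEnd ℂ c) • x‖ :=
      norm_sub_norm_le _ _
    have h3 : ‖(starRingEnd ℂ c) • x‖ = ‖c‖ * ‖x‖ := by
      rw [norm_smul, RCLike.norm_conj]
    rw [h, h3] at h2
    calc (1 - ‖c‖) * ‖x‖ = ‖x‖ - ‖c‖ * ‖x‖ := by ring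
    _ ≤ _ := h2
  · rw [adjoint_factor]
    exact ker_adj_sub_findim S h hc hker


lemma aeval_commute (D : K →L[ℂ] K) (f g : Polynomial ℂ) :
    Commute (Polynomial.aeval D f) (Polynomial.aeval D g) := by
  unfold Commute SemiconjBy
  rw [← map_mul, ← map_mul, mul_comm]

lemma unit_quot_findim (u : (K →L[ℂ] K)ˣ) :
    FiniteDimensional ℂ (K ⧸ LinearMap.range ((↑u : K →L[ℂ] K) : K →ₗ[ℂ] K)) := by
  rw [finCodim_iff]
  refine ⟨∅, Set.finite_empty, ?_⟩
  have : LinearMap.range ((↑u : K →L[ℂ] K) : K →ₗ[ℂ] K) = ⊤ := by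
    rw [LinearMap.range_eq_top]
    intro y
    refine ⟨(↑u⁻¹ : K →L[ℂ] K) y, ?_⟩
    rw [ContinuousLinearMap.coe_coe]
    rw [← mul_apply_eq_comp, u.mul_inv, ContinuousLinearMap.one_apply]
  rw [this]
  simp

/-- The Blaschke-type product attached to a list of points in the disk. -/
lemma blaschke_exists (S : K →L[ℂ] K) (h : ∀ x, ‖S x‖ = ‖x‖)
    (hker : FiniteDimensional ℂ ↥(LinearMap.ker ((adjoint S : K →L[ℂ] K) : K →ₗ[ℂ] K)))
    (l : List ℂ) (hl : ∀ c ∈ l, ‖c‖ < 1) :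
    ∃ Φ : K →L[ℂ] K,
      (∀ x, ‖Φ x‖ = ‖x‖) ∧
      (∀ B : K →L[ℂ] K, Commute B S → Commute B Φ) ∧
      FiniteDimensional ℂ (K ⧸ LinearMap.range (Φ : K →ₗ[ℂ] K)) ∧
      (∃ R : K →L[ℂ] K, star Φ = R * Polynomial.aeval (star S)
        ((l.map (fun c => Polynomial.X - Polynomial.C c)).prod)) := by
  induction l with
  | nil =>
    refine ⟨1, fun x => rfl, fun B _ => Commute.one_right B, ?_, 1, ?_⟩
    · exact unit_quot_findim 1
    · simp
  | cons c t ih =>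
    have hc : ‖c‖ < 1 := hl c (List.mem_cons_self)
    obtain ⟨Φt, hΦt_iso, hΦt_comm, hΦt_fin, Rt, hRt⟩ :=
      ih (fun d hd => hl d (List.mem_cons_of_mem c hd))
    obtain ⟨u, hu⟩ := one_sub_isUnit S h hc
    set V : K →L[ℂ] K := (S - (starRingEnd ℂ c) • 1) * ↑u⁻¹ with hV
    have hVapp : ∀ x, V x = (S - (starRingEnd ℂ c) • 1) ((↑u⁻¹ : K →L[ℂ] K) x) :=
      fun x => mul_apply_eq_comp _ _ _
    have hV_iso : ∀ x, ‖V x‖ = ‖x‖ := by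
      intro x
      rw [hVapp, factor_norm_eq S h c]
      have : (1 - c • S) ((↑u⁻¹ : K →L[ℂ] K) x) = x := by
        rw [← hu, ← mul_apply_eq_comp, u.mul_inv, ContinuousLinearMap.one_apply]
      rw [this]
    have hV_comm : ∀ B : K →L[ℂ] K, Commute B S → Commute B V := by
      intro B hBS
      apply Commute.mul_right
      · apply Commute.sub_right hBS
        exact Commute.smul_right (Commute.one_right B) _
      · apply Commute.units_inv_right
        rw [hu]
        apply Commute.sub_right (Commute.one_right B)
        exact Commute.smul_right hBS c
    refine ⟨V * Φt, ?_, ?_, ?_, ?_⟩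
    · intro x
      rw [mul_apply_eq_comp, hV_iso, hΦt_iso]
    · intro B hBS
      exact Commute.mul_right (hV_comm B hBS) (hΦt_comm B hBS)
    · apply comp_finCodim
      · apply comp_finCodim
        · exact factor_quot_findim S h hc hker
        · exact unit_quot_findim u⁻¹
      · exact hΦt_fin
    · -- adjoint property
      -- star unit
      refine ⟨Rt * (star (↑u⁻¹ : K →L[ℂ] K)), ?_⟩
      have hsu : (star (↑u : K →L[ℂ] K)) * (star (↑u⁻¹ : K →L[ℂ] K)) = 1 := by
        rw [← star_mul, u.inv_mul, star_one]
      have hsu' : (star (↑u⁻¹ : K →L[ℂ] K)) * (star (↑u : K →L[ℂ] K)) = 1 := by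
        rw [← star_mul, u.mul_inv, star_one]
      have hstaru : (star (↑u : K →L[ℂ] K)) =
          Polynomial.aeval (star S) (1 - Polynomial.C (starRingEnd ℂ c) * Polynomial.X) := by
        rw [hu, star_sub, star_one, star_smul, map_sub, map_one, map_mul,
          Polynomial.aeval_C, Polynomial.aeval_X, ← Algebra.smul_def]
        rfl
      -- star V = star(u⁻¹) * (S* - c)
      have hstarV : star V = (star (↑u⁻¹ : K →L[ℂ] K)) *
          Polynomial.aeval (star S) (Polynomial.X - Polynomial.C c) := by
        rw [hV, star_mul]
        congr 1
        rw [star_sub, star_smul, star_one, map_sub, Polynomial.aeval_X, Polynomial.aeval_C,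
          Algebra.algebraMap_eq_smul_one]
        congr 1
        simp [Complex.star_def]
      -- star(u⁻¹) commutes with polynomials in star S
      set su : (K →L[ℂ] K)ˣ := ⟨star (↑u : K →L[ℂ] K), star (↑u⁻¹ : K →L[ℂ] K), hsu, hsu'⟩
        with hsu_def
      have hcommsu : ∀ f : Polynomial ℂ,
          Commute (Polynomial.aeval (star S) f) (star (↑u⁻¹ : K →L[ℂ] K)) := by
        intro f
        have hcu : Commute (Polynomial.aeval (star S) f) (↑su : K →L[ℂ] K) := by
          show Commute _ (star (↑u : K →L[ℂ] K))
          rw [hstaru]; exact aeval_commute _ _ _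
        exact hcu.units_inv_right
      -- assemble
      set g : ℂ → Polynomial ℂ := fun d => Polynomial.X - Polynomial.C d with hg
      have hprod : ((c :: t).map g).prod = ((t.map g).prod) * (g c) := by
        rw [List.map_cons, List.prod_cons, mul_comm]
      rw [hprod, star_mul, hRt, hstarV, map_mul]
      calc (Rt * Polynomial.aeval (star S) ((t.map g).prod)) *
            ((star (↑u⁻¹ : K →L[ℂ] K)) * Polynomial.aeval (star S) (g c))
          = Rt * ((Polynomial.aeval (star S) ((t.map g).prod)) *
              (star (↑u⁻¹ : K →L[ℂ] K))) * Polynomial.aeval (star S) (g c) := by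
            rw [mul_assoc, mul_assoc, mul_assoc]
      _ = Rt * ((star (↑u⁻¹ : K →L[ℂ] K)) *
              (Polynomial.aeval (star S) ((t.map g).prod))) * Polynomial.aeval (star S) (g c) := by
            rw [(hcommsu ((t.map g).prod)).eq]
      _ = Rt * star (↑u⁻¹ : K →L[ℂ] K) *
            (Polynomial.aeval (star S) ((t.map g).prod) * Polynomial.aeval (star S) (g c)) := by
            rw [mul_assoc, mul_assoc, mul_assoc]


lemma clmRestrict_coe (S : K →L[ℂ] K) (E : Submodule ℂ K) (h : ∀ x ∈ E, S x ∈ E)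
    (x : ↥E) : (clmRestrict S E h x : K) = S ↑x := rfl

lemma clmRestrict_pow_coe (S : K →L[ℂ] K) (E : Submodule ℂ K) (h : ∀ x ∈ E, S x ∈ E)
    (n : ℕ) (x : ↥E) : ((clmRestrict S E h ^ n) x : K) = (S ^ n) ↑x := by
  induction n with
  | zero => simp
  | succ k ih =>
    rw [pow_succ', pow_succ', mul_apply_eq_comp, mul_apply_eq_comp, clmRestrict_coe, ih]

lemma clmRestrict_commute (S T : K →L[ℂ] K) (E : Submodule ℂ K)
    (hS : ∀ x ∈ E, S x ∈ E) (hT : ∀ x ∈ E, T x ∈ E) (hc : Commute S T) :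
    Commute (clmRestrict S E hS) (clmRestrict T E hT) := by
  ext x
  rw [mul_apply_eq_comp, mul_apply_eq_comp, clmRestrict_coe, clmRestrict_coe, clmRestrict_coe, clmRestrict_coe]
  have := congrArg (fun f : K →L[ℂ] K => f ↑x) hc.eq
  simpa [mul_apply_eq_comp] using this

lemma clmRestrict_pure (S : K →L[ℂ] K) (E : Submodule ℂ K) (h : ∀ x ∈ E, S x ∈ E)
    (hp : IsPureIsometry S) : IsPureIsometry (clmRestrict S E h) := by
  obtain ⟨hnorm, hpure⟩ := hp
  constructor
  · intro x
    have : ‖clmRestrict S E h x‖ = ‖(clmRestrict S E h x : K)‖ := rfl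
    rw [this, clmRestrict_coe, hnorm]
    rfl
  · ext y
    simp only [Set.mem_iInter, Set.mem_singleton_iff]
    constructor
    · intro hy
      have hco : ∀ n : ℕ, (y : K) ∈ Set.range ⇑(S ^ (n + 1)) := by
        intro n
        obtain ⟨z, hz⟩ := hy n
        exact ⟨↑z, by rw [← clmRestrict_pow_coe S E h (n+1) z, hz]⟩
      have : (y : K) ∈ (⋂ n : ℕ, Set.range (⇑(S ^ (n + 1)))) := Set.mem_iInter.mpr hco
      rw [hpure] at this
      exact Subtype.ext this
    · rintro rfl
      intro n
      exact ⟨0, map_zero _⟩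

lemma clmRestrict_polyOp_coe (q : CPoly2) (S T : K →L[ℂ] K) (E : Submodule ℂ K)
    (hS : ∀ x ∈ E, S x ∈ E) (hT : ∀ x ∈ E, T x ∈ E) (x : ↥E) :
    ((polyOp q (clmRestrict S E hS) (clmRestrict T E hT)) x : K) = polyOp q S T ↑x := by
  unfold polyOp
  rw [ContinuousLinearMap.sum_apply, ContinuousLinearMap.sum_apply]
  rw [AddSubmonoidClass.coe_finset_sum]
  apply Finset.sum_congr rfl
  intro m _
  rw [ContinuousLinearMap.smul_apply, ContinuousLinearMap.smul_apply, Submodule.coe_smul]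
  congr 1
  rw [mul_apply_eq_comp, mul_apply_eq_comp, clmRestrict_pow_coe, clmRestrict_pow_coe]

lemma clmRestrict_isopair (p : CPoly2) (S T : K →L[ℂ] K) (E : Submodule ℂ K)
    (hS : ∀ x ∈ E, S x ∈ E) (hT : ∀ x ∈ E, T x ∈ E) (hV : IsPureIsopair p S T) :
    IsPureIsopair p (clmRestrict S E hS) (clmRestrict T E hT) := by
  obtain ⟨hc, hps, hpt, hpoly⟩ := hV
  refine ⟨clmRestrict_commute S T E hS hT hc, clmRestrict_pure S E hS hps,
    clmRestrict_pure T E hT hpt, ?_⟩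
  ext x
  rw [clmRestrict_polyOp_coe]
  have := congrArg (fun f : K →L[ℂ] K => f ↑x) hpoly
  simpa using this


lemma restrict_pow_coe (B : K →L[ℂ] K) (M : Submodule ℂ K) (hM : ∀ x ∈ M, B x ∈ M)
    (n : ℕ) (m : ↥M) :
    (B ^ n) ↑m = ↑((((B : K →ₗ[ℂ] K).restrict hM) ^ n) m) := by
  induction n with
  | zero => simp
  | succ k ih =>
    have h1 : (B ^ (k+1)) ↑m = B ((B ^ k) ↑m) := by rw [pow_succ', mul_apply_eq_comp]
    rw [h1, ih]
    rw [show ((B : K →ₗ[ℂ] K).restrict hM) ^ (k+1)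
        = ((B : K →ₗ[ℂ] K).restrict hM) * ((B : K →ₗ[ℂ] K).restrict hM) ^ k
      from pow_succ' _ k, Module.End.mul_apply, LinearMap.restrict_coe_apply]
    rfl

lemma aeval_restrict_coe (B : K →L[ℂ] K) (M : Submodule ℂ K) (hM : ∀ x ∈ M, B x ∈ M)
    (f : Polynomial ℂ) (m : ↥M) :
    (Polynomial.aeval B f) ↑m = ↑((Polynomial.aeval ((B : K →ₗ[ℂ] K).restrict hM) f) m) := by
  induction f using Polynomial.induction_on' with
  | add p q hp hq => simp [map_add, add_apply, LinearMap.add_apply, hp, hq]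
  | monomial n a =>
    rw [Polynomial.aeval_monomial, Polynomial.aeval_monomial]
    simp only [mul_apply_eq_comp, Module.End.mul_apply]
    rw [restrict_pow_coe B M hM n m]
    rw [Algebra.algebraMap_eq_smul_one, Algebra.algebraMap_eq_smul_one]
    simp

lemma star_aeval (B : K →L[ℂ] K) (f : Polynomial ℂ) :
    star (Polynomial.aeval B f) =
      Polynomial.aeval (star B) (f.map (starRingEnd ℂ)) := by
  induction f using Polynomial.induction_on' with
  | add p q hp hq => simp [map_add, star_add, hp, hq]
  | monomial n a =>
    rw [Polynomial.aeval_monomial, Polynomial.map_monomial, Polynomial.aeval_monomial]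
    rw [star_mul, star_pow]
    have h1 : star ((algebraMap ℂ (K →L[ℂ] K)) a) = (algebraMap ℂ (K →L[ℂ] K)) (starRingEnd ℂ a) := by
      rw [Algebra.algebraMap_eq_smul_one, Algebra.algebraMap_eq_smul_one, star_smul, star_one]
      rfl
    rw [h1]
    exact (Algebra.commutes ((starRingEnd ℂ) a) ((star B) ^ n)).symm

end AuxStatement13

open ContinuousLinearMap
local notation "⟪" x ", " y "⟫" => @inner ℂ _ _ x y
set_option maxHeartbeats 1600000

/-- if some closed invariant finite codimension subspace restriction of
`V` is `β`-cyclic, then `V` is unitarily equivalent to a restriction of a `β`-cyclic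
pure `p`-isopair to a closed invariant subspace of finite codimension. -/
theorem statement13 {K : Type u} [NormedAddCommGroup K] [InnerProductSpace ℂ K]
    [CompleteSpace K] (p : CPoly2) (hsf : SqFree p) (hit : InnerToral p)
    (S T : K →L[ℂ] K) (hV : IsPureIsopair p S T) (hfin : FiniteBimult S T) (β : ℕ)
    (E : Submodule ℂ K) (hEc : IsClosed (E : Set K))
    (hSE : ∀ x ∈ E, S x ∈ E) (hTE : ∀ x ∈ E, T x ∈ E)
    (hcodim : FiniteDimensional ℂ (K ⧸ E))
    (hcyc : IsKCyclic (clmRestrict S E hSE) (clmRestrict T E hTE) β) :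
    ∃ (W : HilbertPair.{u}) (F : Submodule ℂ W.space) (_ : IsClosed (F : Set W.space))
      (hSF : ∀ x ∈ F, W.S x ∈ F) (hTF : ∀ x ∈ F, W.T x ∈ F),
      IsPureIsopair p W.S W.T ∧ IsKCyclic W.S W.T β ∧
      FiniteDimensional ℂ (W.space ⧸ F) ∧
      UnitarilyEquivPairs (clmRestrict W.S F hSF) (clmRestrict W.T F hTF) S T := by
  classical
  obtain ⟨hcomm, ⟨hSnorm, hSpure⟩, ⟨hTnorm, hTpure⟩, hpoly⟩ := hV
  haveI hEcs : CompleteSpace ↥E := hEc.completeSpace_coe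
  -- the orthogonal complement M is finite dimensional
  haveI hMfd : FiniteDimensional ℂ ↥(Eᗮ) := by
    have hcompl : IsCompl E Eᗮ := Submodule.isCompl_orthogonal_of_hasOrthogonalProjection
    have e := Submodule.quotientEquivOfIsCompl E Eᗮ hcompl
    exact Module.Finite.equiv e
  -- M is invariant under adjoint S
  have hMinv : ∀ x ∈ Eᗮ, ContinuousLinearMap.adjoint S x ∈ Eᗮ := by
    intro x hx
    rw [Submodule.mem_orthogonal] at hx ⊢
    intro e he
    have h1 : ⟪ContinuousLinearMap.adjoint S x, e⟫ = ⟪x, S e⟫ :=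
      ContinuousLinearMap.adjoint_inner_left S e x
    have h2 : ⟪x, S e⟫ = 0 := by
      rw [← inner_conj_symm, hx (S e) (hSE e he), map_zero]
    rw [← inner_conj_symm, h1, h2, map_zero]
  set A := ((ContinuousLinearMap.adjoint S : K →ₗ[ℂ] K)).restrict hMinv with hA
  set χ := minpoly ℂ A with hχ
  have hmonic : χ.Monic := minpoly.monic (Algebra.IsIntegral.isIntegral (R := ℂ) A)
  have hsplit : Polynomial.Splits χ := IsAlgClosed.splits χ
  have hfact : χ = (χ.roots.map (fun a => Polynomial.X - Polynomial.C a)).prod :=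
    hsplit.eq_prod_roots_of_monic hmonic
  set l : List ℂ := χ.roots.toList with hldef
  have hl : ∀ c ∈ l, ‖c‖ < 1 := by
    intro c hcl
    have hroot : χ.IsRoot c := Polynomial.isRoot_of_mem_roots (by
      rwa [hldef, Multiset.mem_toList] at hcl)
    have heig : Module.End.HasEigenvalue A c := Module.End.hasEigenvalue_of_isRoot hroot
    obtain ⟨v, hv⟩ := Module.End.HasEigenvalue.exists_hasEigenvector heig
    have hv1 : A v = c • v := Module.End.HasEigenvector.apply_eq_smul hv
    have hv2 : (ContinuousLinearMap.adjoint S) (↑v : K) = c • (↑v : K) := by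
      have : ((A v : ↥(Eᗮ)) : K) = (ContinuousLinearMap.adjoint S) ↑v :=
        LinearMap.restrict_coe_apply _ _ _
      rw [← this, hv1, Submodule.coe_smul]
    have hv3 : (↑v : K) ≠ 0 := fun hc0 => hv.right (by
      apply Subtype.ext
      simpa using hc0)
    exact eig_adj_lt_one S hSnorm hSpure hv3 hv2
  -- kernel of adjoint S is finite dimensional
  haveI hkerS : FiniteDimensional ℂ ↥(LinearMap.ker ((ContinuousLinearMap.adjoint S : K →L[ℂ] K) : K →ₗ[ℂ] K)) := by
    have := hfin.1
    rw [multiplicity'] at this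
    exact Module.rank_lt_aleph0_iff.mp this
  obtain ⟨Φ, hiso, hcomm', hfinQ, R, hstar⟩ := blaschke_exists S hSnorm hkerS l hl
  -- the list product equals χ
  have hlprod : ((l.map (fun c => Polynomial.X - Polynomial.C c)).prod : Polynomial ℂ) = χ := by
    rw [← Multiset.prod_coe, ← Multiset.map_coe, Multiset.coe_toList]
    exact hfact.symm
  -- star Φ kills Eᗮ
  have hstarkill : ∀ u ∈ Eᗮ, star Φ u = 0 := by
    intro u hu
    rw [hstar, mul_apply_eq_comp, hlprod]
    have h2 : (Polynomial.aeval (star S) χ) u = ((Polynomial.aeval A χ) ⟨u, hu⟩ : K) := by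
      rw [ContinuousLinearMap.star_eq_adjoint]
      exact aeval_restrict_coe (ContinuousLinearMap.adjoint S) Eᗮ hMinv χ ⟨u, hu⟩
    rw [h2, minpoly.aeval]
    simp
  -- range of Φ is inside E
  have hrangeE : ∀ x : K, Φ x ∈ E := by
    intro x
    rw [← Submodule.orthogonal_orthogonal E]
    rw [Submodule.mem_orthogonal]
    intro u hu
    have h1 : ⟪ContinuousLinearMap.adjoint Φ u, x⟫ = ⟪u, Φ x⟫ :=
      ContinuousLinearMap.adjoint_inner_left Φ x u
    rw [← h1, ← ContinuousLinearMap.star_eq_adjoint, hstarkill u hu, inner_zero_left]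
  -- basic facts about Φ
  have hisoΦ : Isometry ⇑Φ := AddMonoidHomClass.isometry_of_norm Φ hiso
  have hclΦ : IsClosed (Set.range ⇑Φ) := hisoΦ.isClosedEmbedding.isClosed_range
  have hΦS : Commute S Φ := hcomm' S (Commute.refl S)
  have hΦT : Commute T Φ := hcomm' T hcomm.symm
  have hSΦ : ∀ x : K, S (Φ x) = Φ (S x) := by
    intro x
    have := congrArg (fun f : K →L[ℂ] K => f x) hΦS.eq
    simpa [mul_apply_eq_comp] using this
  have hTΦ : ∀ x : K, T (Φ x) = Φ (T x) := by
    intro x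
    have := congrArg (fun f : K →L[ℂ] K => f x) hΦT.eq
    simpa [mul_apply_eq_comp] using this
  -- the subspace F of E
  set F : Submodule ℂ ↥E := Submodule.comap E.subtype (LinearMap.range (Φ : K →ₗ[ℂ] K)) with hF
  have hFmem : ∀ x : ↥E, x ∈ F ↔ (x : K) ∈ LinearMap.range (Φ : K →ₗ[ℂ] K) := by
    intro x; rw [hF, Submodule.mem_comap]; rfl
  have hFcl : IsClosed (F : Set ↥E) := by
    have h1 : (F : Set ↥E) = (Subtype.val) ⁻¹' ((LinearMap.range (Φ : K →ₗ[ℂ] K) : Submodule ℂ K) : Set K) :=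
      rfl
    rw [h1]
    apply IsClosed.preimage continuous_subtype_val
    rw [LinearMap.coe_range]
    exact hclΦ
  have hSF : ∀ x ∈ F, clmRestrict S E hSE x ∈ F := by
    intro x hx
    rw [hFmem] at hx ⊢
    obtain ⟨y, hy⟩ := hx
    rw [clmRestrict_coe, ← hy, ContinuousLinearMap.coe_coe, hSΦ]
    exact ⟨S y, rfl⟩
  have hTF : ∀ x ∈ F, clmRestrict T E hTE x ∈ F := by
    intro x hx
    rw [hFmem] at hx ⊢
    obtain ⟨y, hy⟩ := hx
    rw [clmRestrict_coe, ← hy, ContinuousLinearMap.coe_coe, hTΦ]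
    exact ⟨T y, rfl⟩
  -- finite codimension of F in E
  haveI hfinQ' : FiniteDimensional ℂ (K ⧸ LinearMap.range (Φ : K →ₗ[ℂ] K)) := hfinQ
  have hFfd : FiniteDimensional ℂ (↥E ⧸ F) := by
    have hψ : LinearMap.ker (((LinearMap.range (Φ : K →ₗ[ℂ] K)).mkQ).comp (E.subtype)) = F := by
      rw [LinearMap.ker_comp, Submodule.ker_mkQ]
    have e2 := LinearMap.quotKerEquivRange (((LinearMap.range (Φ : K →ₗ[ℂ] K)).mkQ).comp (E.subtype))
    rw [hψ] at e2
    exact Module.Finite.equiv e2.symm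
  -- the unitary map
  have hmemF : ∀ x : K, (⟨Φ x, hrangeE x⟩ : ↥E) ∈ F := by
    intro x
    rw [hFmem]
    exact ⟨x, rfl⟩
  let Ψ : K →ₗᵢ[ℂ] ↥F :=
    { toFun := fun x => ⟨⟨Φ x, hrangeE x⟩, hmemF x⟩
      map_add' := fun x y => by
        apply Subtype.ext; apply Subtype.ext; simp
      map_smul' := fun a x => by
        apply Subtype.ext; apply Subtype.ext; simp
      norm_map' := fun x => hiso x }
  have hsurj : Function.Surjective ⇑Ψ := by
    rintro ⟨⟨z, hzE⟩, hzF⟩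
    rw [hFmem] at hzF
    obtain ⟨x, hx⟩ := hzF
    exact ⟨x, by apply Subtype.ext; apply Subtype.ext; exact hx⟩
  let Ψe : K ≃ₗᵢ[ℂ] ↥F := LinearIsometryEquiv.ofSurjective Ψ hsurj
  have hΨe : ∀ x : K, ((Ψe x : ↥E) : K) = Φ x := fun x => rfl
  have keyS : ∀ x : K, clmRestrict (clmRestrict S E hSE) F hSF (Ψe x) = Ψe (S x) := by
    intro x
    apply Subtype.ext; apply Subtype.ext
    have h1 : ((clmRestrict (clmRestrict S E hSE) F hSF (Ψe x) : ↥E) : K)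
        = S ((Ψe x : ↥E) : K) := rfl
    rw [h1, hΨe, hΨe, hSΦ]
  have keyT : ∀ x : K, clmRestrict (clmRestrict T E hTE) F hTF (Ψe x) = Ψe (T x) := by
    intro x
    apply Subtype.ext; apply Subtype.ext
    have h1 : ((clmRestrict (clmRestrict T E hTE) F hTF (Ψe x) : ↥E) : K)
        = T ((Ψe x : ↥E) : K) := rfl
    rw [h1, hΨe, hΨe, hTΦ]
  have hueq : UnitarilyEquivPairs (clmRestrict (clmRestrict S E hSE) F hSF)
      (clmRestrict (clmRestrict T E hTE) F hTF) S T := by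
    refine ⟨Ψe.symm, ?_, ?_⟩
    · intro y
      calc Ψe.symm (clmRestrict (clmRestrict S E hSE) F hSF y)
          = Ψe.symm (clmRestrict (clmRestrict S E hSE) F hSF (Ψe (Ψe.symm y))) := by
            rw [Ψe.apply_symm_apply]
        _ = Ψe.symm (Ψe (S (Ψe.symm y))) := by rw [keyS]
        _ = S (Ψe.symm y) := Ψe.symm_apply_apply _
    · intro y
      calc Ψe.symm (clmRestrict (clmRestrict T E hTE) F hTF y)
          = Ψe.symm (clmRestrict (clmRestrict T E hTE) F hTF (Ψe (Ψe.symm y))) := by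
            rw [Ψe.apply_symm_apply]
        _ = Ψe.symm (Ψe (T (Ψe.symm y))) := by rw [keyT]
        _ = T (Ψe.symm y) := Ψe.symm_apply_apply _
  exact ⟨⟨↥E, clmRestrict S E hSE, clmRestrict T E hTE⟩, F, hFcl, hSF, hTF,
    clmRestrict_isopair p S T E hSE hTE ⟨hcomm, ⟨hSnorm, hSpure⟩, ⟨hTnorm, hTpure⟩, hpoly⟩,
    hcyc, hFfd, hueq⟩
end
end
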